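/- arXiv:1310.8021 — 4 statements merged into one kernel-verified Lean document; each statement's English description precedes it below -/
import Mathlib

section
/- For integers m ≥ 1, b ≥ 1, c ≥ 0, the number of semistandard Young tableaux of hook shape (b, 1, 1, ..., 1) with c ones (i.e., first row of length b and a column of c additional boxes) filled with entries from {1, ..., m} equals C(b+c-1, b-1) · C(b+m-1, b+c). -/
set_option maxRecDepth 10000

/-- Semistandard Young tableaux of hook shape `(b, 1^c)` on the alphabet `{1,...,m}`:
a weakly increasing first row of length `b` together with a strictly increasing column
of `c` further entries lying strictly below (hence strictly greater than) the first
entry of the row. -/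
abbrev HookSSYT (m b c : ℕ) : Type :=
  {p : (Fin b → Fin m) × (Fin c → Fin m) //
    Monotone p.1 ∧ StrictMono p.2 ∧
    ∀ (h0 : 0 < b) (h1 : 0 < c), p.1 ⟨0, h0⟩ < p.2 ⟨0, h1⟩}

/-- gap lemma for strictly monotone maps between `Fin`s -/
lemma strictMono_gap {n M : ℕ} {g : Fin n → Fin M} (hg : StrictMono g) :
    ∀ d : ℕ, ∀ i j : Fin n, (j : ℕ) = (i : ℕ) + d → (g i : ℕ) + d ≤ g j := by
  intro d
  induction d with
  | zero => intro i j h; have : i = j := Fin.ext (by omega); subst this; omega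
  | succ d ih =>
    intro i j h
    have hj' : (i : ℕ) + d < n := by have := j.isLt; omega
    have h1 := ih i ⟨(i : ℕ) + d, hj'⟩ rfl
    have h2 : g ⟨(i : ℕ) + d, hj'⟩ < g j :=
      hg (Fin.lt_def.mpr (show (i : ℕ) + d < (j : ℕ) by omega))
    have h3 := Fin.lt_def.mp h2
    omega

lemma card_strict (n k : ℕ) :
    Nat.card {f : Fin n → Fin k // StrictMono f} = k.choose n := by
  have e : {f : Fin n → Fin k // StrictMono f} ≃ {s : Finset (Fin k) // s.card = n} :=
    { toFun := fun f => ⟨Finset.univ.map ⟨f.1, f.2.injective⟩, by simp⟩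
      invFun := fun s => ⟨s.1.orderEmbOfFin s.2, (s.1.orderEmbOfFin s.2).strictMono⟩
      left_inv := fun f => Subtype.ext
        (Finset.orderEmbOfFin_unique _ (fun x => by simp) f.2).symm
      right_inv := fun s => Subtype.ext (by
        apply Finset.coe_injective
        simp [Finset.coe_map, Set.image_univ, Finset.range_orderEmbOfFin]) }
  rw [Nat.card_congr e, Nat.card_eq_fintype_card, Fintype.card_finset_len, Fintype.card_fin]

lemma card_mono (n k : ℕ) :
    Nat.card {f : Fin n → Fin (k + 1) // Monotone f} = (k + n).choose n := by
  have e : {f : Fin n → Fin (k + 1) // Monotone f} ≃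
      {g : Fin n → Fin (k + n) // StrictMono g} :=
    { toFun := fun f => ⟨fun i => ⟨f.1 i + i, by have h1 := (f.1 i).isLt; have h2 := i.isLt; omega⟩,
        by
          intro i j hij
          have h1 := Fin.le_def.mp (f.2 (le_of_lt hij))
          have h2 := Fin.lt_def.mp hij
          exact Fin.mk_lt_mk.mpr (by omega)⟩
      invFun := fun g => ⟨fun i => ⟨g.1 i - i, by
          have h1 := strictMono_gap g.2 ((n - 1) - (i : ℕ)) i
            ⟨n - 1, by have := i.isLt; omega⟩
            (show n - 1 = (i : ℕ) + ((n - 1) - (i : ℕ)) by have := i.isLt; omega)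
          have h2 := (g.1 ⟨n - 1, by have := i.isLt; omega⟩).isLt
          have h3 := i.isLt
          omega⟩,
        by
          intro i j hij
          have h1 := strictMono_gap g.2 ((j : ℕ) - (i : ℕ)) i j
            (by have := Fin.le_def.mp hij; omega)
          have h2 := Fin.le_def.mp hij
          exact Fin.mk_le_mk.mpr (by omega)⟩
      left_inv := fun f => Subtype.ext (funext fun i => Fin.ext (by simp))
      right_inv := fun g => Subtype.ext (funext fun i => Fin.ext (by
          have hz : (i : ℕ) < n := i.isLt
          have h1 := strictMono_gap g.2 (i : ℕ) ⟨0, by omega⟩ i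
            (show (i : ℕ) = (⟨0, by omega⟩ : Fin n) + (i : ℕ) by
              rw [show ((⟨0, by omega⟩ : Fin n) : ℕ) = 0 from rfl]; omega)
          simp; omega)) }
  rw [Nat.card_congr e, card_strict]

def fiber_equiv (m b' c : ℕ) (a : Fin m) :
    {p : HookSSYT m (b' + 1) c // p.1.1 ⟨0, Nat.succ_pos b'⟩ = a} ≃
      ({g : Fin b' → Fin (m - 1 - a + 1) // Monotone g} ×
       {h : Fin c → Fin (m - 1 - a) // StrictMono h}) where
  toFun := fun x =>
    have hr := x.1.2.1
    have hs := x.1.2.2.1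
    have hrs := x.1.2.2.2
    have hkey : ∀ j : Fin c, (a : ℕ) < x.1.1.2 j := fun j => by
      have ha : (x.1.1.1 ⟨0, Nat.succ_pos b'⟩ : ℕ) = a := congrArg Fin.val x.2
      have h1 := Fin.lt_def.mp (hrs (Nat.succ_pos b') (by have := j.isLt; omega))
      have h2 := Fin.le_def.mp
        (hs.monotone (show (⟨0, by have := j.isLt; omega⟩ : Fin c) ≤ j from
          Fin.le_def.mpr (show (0 : ℕ) ≤ (j : ℕ) by omega)))
      omega
    (⟨fun i => ⟨(x.1.1.1 i.succ : ℕ) - a, by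
        have h1 := (x.1.1.1 i.succ).isLt; have h2 := a.isLt; omega⟩, by
        intro i j hij
        have h1 := Fin.le_def.mp (hr (Fin.succ_le_succ_iff.mpr hij))
        exact Fin.mk_le_mk.mpr (by omega)⟩,
     ⟨fun j => ⟨(x.1.1.2 j : ℕ) - (a + 1), by
        have h1 := (x.1.1.2 j).isLt; have h2 := hkey j; omega⟩, by
        intro i j hij
        have h1 := Fin.lt_def.mp (hs hij)
        have h2 := hkey i
        exact Fin.mk_lt_mk.mpr (by omega)⟩)
  invFun := fun y =>
    ⟨⟨(fun i => Fin.cases ⟨a, a.isLt⟩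
          (fun i' => ⟨(a : ℕ) + y.1.1 i',
            by have h1 := (y.1.1 i').isLt; have h2 := a.isLt; omega⟩) i,
       fun j => ⟨(a : ℕ) + 1 + y.2.1 j,
            by have h1 := (y.2.1 j).isLt; have h2 := a.isLt; omega⟩),
      by
        intro i j hij
        induction i using Fin.cases with
        | zero =>
          induction j using Fin.cases with
          | zero => exact le_refl _
          | succ j' =>
            simp only [Fin.cases_zero, Fin.cases_succ]
            exact Fin.mk_le_mk.mpr (by omega)
        | succ i' =>
          induction j using Fin.cases with
          | zero =>
            have h0 := Fin.le_def.mp hij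
            simp at h0
          | succ j' =>
            simp only [Fin.cases_succ]
            have h1 := Fin.le_def.mp (y.1.2 (Fin.succ_le_succ_iff.mp hij))
            exact Fin.mk_le_mk.mpr (by omega),
      by
        intro i j hij
        have h1 := Fin.lt_def.mp (y.2.2 hij)
        exact Fin.mk_lt_mk.mpr (by omega),
      by
        intro h0 h1
        have hz : (⟨0, h0⟩ : Fin (b' + 1)) = 0 := rfl
        rw [hz]
        simp only [Fin.cases_zero]
        exact Fin.mk_lt_mk.mpr (by omega)⟩,
     by
      have hz : (⟨0, Nat.succ_pos b'⟩ : Fin (b' + 1)) = 0 := rfl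
      rw [hz]
      simp only [Fin.cases_zero]⟩
  left_inv := fun x => by
    obtain ⟨⟨⟨r, s⟩, hr, hs, hrs⟩, ha⟩ := x
    dsimp only at hr hs hrs ha ⊢
    have ha' : (r ⟨0, Nat.succ_pos b'⟩ : ℕ) = a := congrArg Fin.val ha
    apply Subtype.ext
    apply Subtype.ext
    apply Prod.ext
    · funext i
      induction i using Fin.cases with
      | zero =>
        simp only [Fin.cases_zero]
        exact Fin.ext (show (a : ℕ) = _ from ha'.symm)
      | succ i' =>
        simp only [Fin.cases_succ]
        apply Fin.ext
        have h1 := Fin.le_def.mp (hr (show (⟨0, Nat.succ_pos b'⟩ : Fin (b' + 1)) ≤ i'.succ from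
          Fin.le_def.mpr (show (0 : ℕ) ≤ (i'.succ : ℕ) by omega)))
        show (a : ℕ) + ((r i'.succ : ℕ) - a) = (r i'.succ : ℕ)
        omega
    · funext j
      apply Fin.ext
      have h1 := Fin.lt_def.mp (hrs (Nat.succ_pos b') (by have := j.isLt; omega))
      have h2 := Fin.le_def.mp (hs.monotone
        (show (⟨0, by have := j.isLt; omega⟩ : Fin c) ≤ j from
          Fin.le_def.mpr (show (0 : ℕ) ≤ (j : ℕ) by omega)))
      show (a : ℕ) + 1 + ((s j : ℕ) - ((a : ℕ) + 1)) = (s j : ℕ)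
      omega
  right_inv := fun y => by
    obtain ⟨⟨g, hg⟩, ⟨h, hh⟩⟩ := y
    apply Prod.ext
    · apply Subtype.ext
      funext i
      apply Fin.ext
      simp only [Fin.cases_succ]
      have h1 := (g i).isLt
      show ((a : ℕ) + (g i : ℕ)) - a = (g i : ℕ)
      omega
    · apply Subtype.ext
      funext j
      apply Fin.ext
      show ((a : ℕ) + 1 + (h j : ℕ)) - ((a : ℕ) + 1) = (h j : ℕ)
      omega

lemma natCard_sigma {m : ℕ} (β : Fin m → Type*) [∀ a, Finite (β a)] :
    Nat.card (Σ a, β a) = ∑ a, Nat.card (β a) := by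
  haveI : ∀ a, Fintype (β a) := fun a => Fintype.ofFinite _
  simp [Nat.card_eq_fintype_card]

lemma sum_id (b' c m : ℕ) :
    ∑ k ∈ Finset.range m, (k + b').choose b' * k.choose c
      = (b' + c).choose b' * (b' + m).choose (b' + c + 1) := by
  induction m with
  | zero => simp [Nat.choose_eq_zero_of_lt (show b' < b' + c + 1 by omega)]
  | succ m ih =>
    rw [Finset.sum_range_succ, ih]
    have hp : (b' + (m + 1)).choose (b' + c + 1)
        = (b' + m).choose (b' + c) + (b' + m).choose (b' + c + 1) := by
      have h : b' + (m + 1) = (b' + m) + 1 := by omega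
      rw [h, Nat.choose_succ_succ (b' + m) (b' + c)]
    rw [hp, Nat.mul_add]
    have key : (b' + c).choose b' * (b' + m).choose (b' + c)
        = (m + b').choose b' * m.choose c := by
      by_cases hcm : c ≤ m
      · have h := Nat.choose_mul (n := b' + m) (show b' ≤ b' + c by omega)
        simp only [Nat.add_sub_cancel_left, Nat.add_sub_cancel] at h
        rw [Nat.mul_comm] at h
        rw [Nat.mul_comm ((b' + c).choose b'), Nat.mul_comm, h, Nat.add_comm b' m]
      · rw [Nat.choose_eq_zero_of_lt (show b' + m < b' + c by omega),
          Nat.choose_eq_zero_of_lt (show m < c by omega)]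
        simp
    rw [key]
    omega

theorem ssyt_hook_count (m b c : ℕ) (hm : 1 ≤ m) (hb : 1 ≤ b) :
    Nat.card (HookSSYT m b c) =
      (b + c - 1).choose (b - 1) * (b + m - 1).choose (b + c) := by
  obtain ⟨b', rfl⟩ : ∃ b', b = b' + 1 := ⟨b - 1, by omega⟩
  have e1 : HookSSYT m (b' + 1) c ≃
      Σ a : Fin m, {p : HookSSYT m (b' + 1) c // p.1.1 ⟨0, Nat.succ_pos b'⟩ = a} :=
    (Equiv.sigmaFiberEquiv _).symm
  rw [Nat.card_congr e1, natCard_sigma]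
  have e2 : ∀ a : Fin m,
      Nat.card {p : HookSSYT m (b' + 1) c // p.1.1 ⟨0, Nat.succ_pos b'⟩ = a}
        = (m - 1 - a + b').choose b' * (m - 1 - a).choose c := by
    intro a
    rw [Nat.card_congr (fiber_equiv m b' c a), Nat.card_prod, card_mono, card_strict]
  simp only [e2]
  rw [Fin.sum_univ_eq_sum_range (fun k => (m - 1 - k + b').choose b' * (m - 1 - k).choose c)]
  rw [Finset.sum_range_reflect (fun k => (k + b').choose b' * k.choose c) m]
  rw [sum_id b' c m]
  rw [show b' + 1 + c - 1 = b' + c by omega, show b' + 1 - 1 = b' by omega,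
    show b' + 1 + m - 1 = b' + m by omega, show b' + 1 + c = b' + c + 1 by omega]
end

section
/- Let P be an N×N Markov transition matrix whose eigenvalues β_1,...,β_{N-1}, β_N = 1 satisfy β_j ≠ 1 for j < N, with stationary distribution π, and let Π(x,y) = π(y). Let e_1,...,e_{N-1} be the elementary symmetric polynomials in β_1,...,β_{N-1} and g(x) = (x-β_1)···(x-β_{N-1}). Then g(P - Π) = (-1)^{N-1} e_{N-1} Π; equivalently, (P^{N-1} - Π) - e_1(P^{N-2} - Π) + e_2(P^{N-3} - Π) - ··· + (-1)^{N-1} e_{N-1}(I - Π) = 0. -/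
open Polynomial Matrix

/-- If two distinct columns of a square matrix have all entries divisible by `p`,
then `p ^ 2` divides the determinant. -/
lemma pow_two_dvd_det_of_cols {n R : Type*} [Fintype n] [DecidableEq n] [CommRing R]
    (A : Matrix n n R) (p : R) {j₀ j₁ : n} (hne : j₀ ≠ j₁)
    (h0 : ∀ i, p ∣ A i j₀) (h1 : ∀ i, p ∣ A i j₁) : p ^ 2 ∣ A.det := by
  rw [Matrix.det_apply]
  refine Finset.dvd_sum fun σ _ => ?_
  have h : p ^ 2 ∣ ∏ i, A (σ i) i := by
    rw [← Finset.mul_prod_erase Finset.univ _ (Finset.mem_univ j₀),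
      ← Finset.mul_prod_erase _ _ (Finset.mem_erase.mpr ⟨Ne.symm hne, Finset.mem_univ j₁⟩),
      pow_two]
    exact mul_dvd_mul (h0 _) ((h1 _).mul_right _)
  obtain ⟨c, hc⟩ := h
  refine ⟨((Equiv.Perm.sign σ : ℤ) : R) * c, ?_⟩
  rw [hc, Units.smul_def, zsmul_eq_mul]
  ring

/-- Proposition 5.1 of the paper: if the eigenvalues of the Markov matrix `P` are
`β_1, ..., β_{N-1}, β_N = 1` with `β_j ≠ 1` for `j < N`, `piv` is the stationary
distribution and `Π(x,y) = piv y`, then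
`∑_{k=0}^{N-1} (-1)^k e_k (P^{N-1-k} - Π) = 0`, where `e_k` is the `k`-th elementary
symmetric polynomial in `β_1, ..., β_{N-1}`.  (Everything is viewed over `ℂ` since
eigenvalues may be complex.) -/
theorem cayley_hamilton_pi (N : ℕ) (hN : 2 ≤ N)
    (P : Matrix (Fin N) (Fin N) ℝ) (piv : Fin N → ℝ)
    (hP0 : ∀ i j, 0 ≤ P i j) (hProw : ∀ i, ∑ j, P i j = 1)
    (hpiv0 : ∀ i, 0 ≤ piv i) (hpiv1 : ∑ i, piv i = 1)
    (hstat : ∀ j, ∑ i, piv i * P i j = piv j)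
    (β : Fin N → ℂ)
    (hchar : (P.map (fun a => (a : ℂ))).charpoly
      = ∏ j, (Polynomial.X - Polynomial.C (β j)))
    (hlast : ∀ j : Fin N, (j : ℕ) = N - 1 → β j = 1)
    (hne : ∀ j : Fin N, (j : ℕ) < N - 1 → β j ≠ 1) :
    ∑ k ∈ Finset.range N, ((-1 : ℂ) ^ k *
        (∑ S ∈ (Finset.univ.filter (fun j : Fin N => (j : ℕ) < N - 1)).powersetCard k,
          ∏ j ∈ S, β j)) •
      ((P.map (fun a => (a : ℂ))) ^ (N - 1 - k) - Matrix.of (fun _ y => (piv y : ℂ)))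
      = 0 := by
  classical
  set Q : Matrix (Fin N) (Fin N) ℂ := P.map (fun a => (a : ℂ)) with hQdef
  set Pim : Matrix (Fin N) (Fin N) ℂ := Matrix.of (fun _ y => (piv y : ℂ)) with hPidef
  set F : Finset (Fin N) := Finset.univ.filter (fun j : Fin N => (j : ℕ) < N - 1) with hFdef
  -- basic matrix identities
  have hQrow : ∀ i, ∑ j, Q i j = 1 := by
    intro i
    simp only [hQdef, Matrix.map_apply]
    exact_mod_cast congrArg (fun x : ℝ => (x : ℂ)) (hProw i)
  have hQPi : Q * Pim = Pim := by
    ext x y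
    simp only [mul_apply, hPidef, Matrix.of_apply]
    rw [← Finset.sum_mul, hQrow, one_mul]
  have hPiQ : Pim * Q = Pim := by
    ext x y
    simp only [mul_apply, hPidef, Matrix.of_apply, hQdef, Matrix.map_apply]
    exact_mod_cast congrArg (fun x : ℝ => (x : ℂ)) (hstat y)
  have hPiPi : Pim * Pim = Pim := by
    ext x y
    simp only [mul_apply, hPidef, Matrix.of_apply]
    rw [← Finset.sum_mul]
    norm_cast
    rw [hpiv1, one_mul]
  have hQpowPi : ∀ m, Q ^ m * Pim = Pim := by
    intro m
    induction m with
    | zero => simp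
    | succ m ih => rw [pow_succ, mul_assoc, hQPi, ih]
  have hPiQpow : ∀ m, Pim * Q ^ m = Pim := by
    intro m
    induction m with
    | zero => simp
    | succ m ih => rw [pow_succ, ← mul_assoc, ih, hPiQ]
  -- the distinguished index
  have hN1 : N - 1 < N := by omega
  set flast : Fin N := ⟨N - 1, hN1⟩ with hflast
  have hF : F = Finset.univ.erase flast := by
    ext j
    have hj := j.isLt
    simp only [hFdef, Finset.mem_filter, Finset.mem_univ, true_and, Finset.mem_erase, and_true,
      Ne, Fin.ext_iff, hflast]
    omega
  have hFcard : F.card = N - 1 := by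
    rw [hF, Finset.card_erase_of_mem (Finset.mem_univ _), Finset.card_univ, Fintype.card_fin]
  -- the polynomial g
  set g : Polynomial ℂ := ∏ j ∈ F, (X - C (β j)) with hgdef
  set e : ℕ → ℂ := fun k => ∑ S ∈ F.powersetCard k, ∏ j ∈ S, β j with hedef
  have hgsum : g = ∑ k ∈ Finset.range N, (-1) ^ k * (C (e k) * X ^ (N - 1 - k)) := by
    have h1 : g = ((F.val.map β).map fun t => X - C t).prod := by
      rw [Multiset.map_map, hgdef]
      rfl
    have hc : Multiset.card (F.val.map β) = N - 1 := by
      rw [Multiset.card_map]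
      exact hFcard
    rw [h1, Multiset.prod_X_sub_X_eq_sum_esymm, hc, Nat.sub_add_cancel (by omega : 1 ≤ N)]
    refine Finset.sum_congr rfl fun k _ => ?_
    rw [Finset.esymm_map_val]
  have hg1 : g.eval 1 ≠ 0 := by
    have hv : g.eval 1 = ∏ j ∈ F, (1 - β j) := by
      rw [hgdef, eval_prod]
      exact Finset.prod_congr rfl fun j _ => by simp
    rw [hv]
    refine Finset.prod_ne_zero_iff.mpr fun j hj => sub_ne_zero.mpr ?_
    have hjlt : (j : ℕ) < N - 1 := by
      simpa [hFdef] using hj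
    exact fun h => hne j hjlt h.symm
  -- charpoly factorization
  have hcharfac : Q.charpoly = (X - 1) * g := by
    rw [hchar, ← Finset.mul_prod_erase Finset.univ _ (Finset.mem_univ flast),
      hlast flast rfl, _root_.map_one, ← hF, hgdef]
  -- G = g(Q)
  set G : Matrix (Fin N) (Fin N) ℂ := aeval Q g with hGdef
  have hCH : (Q - 1) * G = 0 := by
    have h0 := Q.aeval_self_charpoly
    rw [hcharfac, _root_.map_mul, _root_.map_sub, aeval_X, _root_.map_one] at h0
    exact h0
  have hQG : Q * G = G := by
    have := hCH
    rw [sub_mul, one_mul, sub_eq_zero] at this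
    exact this
  have haevalPi : ∀ p : Polynomial ℂ, Pim * (aeval Q p) = p.eval 1 • Pim := by
    intro p
    induction p using Polynomial.induction_on' with
    | add p q hp hq => rw [_root_.map_add, mul_add, hp, hq, eval_add, add_smul]
    | monomial n a =>
        rw [aeval_monomial, eval_monomial, one_pow, ← Algebra.smul_def, mul_smul_comm, hPiQpow n, mul_one]
  have hPiG : Pim * G = g.eval 1 • Pim := haevalPi g
  -- G as a sum
  have hGsum : G = ∑ k ∈ Finset.range N, ((-1 : ℂ) ^ k * e k) • Q ^ (N - 1 - k) := by
    rw [hGdef, hgsum, _root_.map_sum]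
    refine Finset.sum_congr rfl fun k _ => ?_
    have h2 : ((-1 : Polynomial ℂ)) ^ k * (C (e k) * X ^ (N - 1 - k))
        = C ((-1) ^ k * e k) * X ^ (N - 1 - k) := by
      rw [_root_.map_mul, _root_.map_pow, _root_.map_neg, _root_.map_one]; ring
    rw [h2, _root_.map_mul, aeval_C, _root_.map_pow, aeval_X, ← Algebra.smul_def]
  have hg1sum : g.eval 1 = ∑ k ∈ Finset.range N, (-1 : ℂ) ^ k * e k := by
    rw [hgsum, eval_finset_sum]
    refine Finset.sum_congr rfl fun k _ => ?_
    simp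
  -- key uniqueness lemma for fixed vectors
  have KEY : ∀ v : Fin N → ℂ, Q.mulVec v = v → (∑ x, (piv x : ℂ) * v x) = 0 → v = 0 := by
    intro v hv hpv
    by_contra hv0
    set one : Fin N → ℂ := fun _ => 1 with honedef
    have hQone : Q.mulVec one = one := by
      funext x
      simp only [Matrix.mulVec, dotProduct, honedef, mul_one]
      exact hQrow x
    have hpone : ∑ x, (piv x : ℂ) * one x = 1 := by
      simp only [honedef, mul_one]
      exact_mod_cast hpiv1
    have hone_ne_v : one ≠ v := by
      intro h
      rw [h, hpv] at hpone
      exact one_ne_zero hpone.symm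
    have hsli : LinearIndepOn ℂ id ({one, v} : Set (Fin N → ℂ)) := by
      rw [show ({one, v} : Set (Fin N → ℂ)) = insert one {v} from rfl,
        linearIndepOn_id_insert (by simpa using hone_ne_v)]
      refine ⟨(linearIndepOn_singleton_iff ℂ).mpr hv0, ?_⟩
      rw [Submodule.mem_span_singleton]
      rintro ⟨a, ha⟩
      have hcontr : (1 : ℂ) = 0 := by
        calc (1 : ℂ) = ∑ x, (piv x : ℂ) * one x := hpone.symm
          _ = ∑ x, (piv x : ℂ) * (a * v x) := by
              rw [← ha]; rfl
          _ = a * ∑ x, (piv x : ℂ) * v x := by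
              rw [Finset.mul_sum]
              exact Finset.sum_congr rfl fun x _ => by ring
          _ = 0 := by rw [hpv, mul_zero]
      exact one_ne_zero hcontr
    set B := Module.Basis.extend hsli with hBdef
    haveI : Fintype (hsli.extend (Set.subset_univ _)) := FiniteDimensional.fintypeBasisIndex B
    set f : (Fin N → ℂ) →ₗ[ℂ] (Fin N → ℂ) := Matrix.toLin' Q with hfdef
    have hchQ : (LinearMap.toMatrix B B f).charpoly = Q.charpoly := by
      rw [LinearMap.charpoly_toMatrix]
      conv_rhs => rw [← LinearMap.toMatrix'_toLin' Q]
      rw [← LinearMap.toMatrix_eq_toMatrix', LinearMap.charpoly_toMatrix]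
    have hone_mem : one ∈ hsli.extend (Set.subset_univ _) :=
      hsli.subset_extend _ (by simp)
    have hv_mem : v ∈ hsli.extend (Set.subset_univ _) :=
      hsli.subset_extend _ (by simp)
    set j₀ : hsli.extend (Set.subset_univ _) := ⟨one, hone_mem⟩ with hj₀
    set j₁ : hsli.extend (Set.subset_univ _) := ⟨v, hv_mem⟩ with hj₁
    have hjne : j₀ ≠ j₁ := fun h => hone_ne_v (congrArg Subtype.val h)
    have hentry : ∀ (j i : hsli.extend (Set.subset_univ _)), Q.mulVec (B j) = B j →
        (LinearMap.toMatrix B B f) i j = if j = i then 1 else 0 := by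
      intro j i hfix
      rw [LinearMap.toMatrix_apply, hfdef, Matrix.toLin'_apply, hfix, Module.Basis.repr_self]
      exact Finsupp.single_apply
    have hfix0 : Q.mulVec (B j₀) = B j₀ := by
      rw [hBdef, Module.Basis.extend_apply_self]
      exact hQone
    have hfix1 : Q.mulVec (B j₁) = B j₁ := by
      rw [hBdef, Module.Basis.extend_apply_self]
      exact hv
    have hdvdcol : ∀ (j : hsli.extend (Set.subset_univ _)), Q.mulVec (B j) = B j →
        ∀ i, (X - 1 : Polynomial ℂ) ∣ (charmatrix (LinearMap.toMatrix B B f)) i j := by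
      intro j hfix i
      by_cases h : i = j
      · subst h
        rw [charmatrix_apply_eq, hentry i i hfix, if_pos rfl, _root_.map_one]
      · rw [charmatrix_apply_ne _ _ _ h, hentry j i hfix, if_neg (fun hh => h hh.symm),
          _root_.map_zero, neg_zero]
        exact dvd_zero _
    have hdvd : (X - 1 : Polynomial ℂ) ^ 2 ∣ (LinearMap.toMatrix B B f).charpoly := by
      rw [Matrix.charpoly]
      exact pow_two_dvd_det_of_cols _ _ hjne (hdvdcol j₀ hfix0) (hdvdcol j₁ hfix1)
    rw [hchQ, hcharfac, pow_two] at hdvd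
    have hX1 : (X - 1 : Polynomial ℂ) ≠ 0 := by
      have := Polynomial.X_sub_C_ne_zero (1 : ℂ)
      simpa using this
    have hgdvd : (X - 1 : Polynomial ℂ) ∣ g := (mul_dvd_mul_iff_left hX1).mp hdvd
    obtain ⟨h, hh⟩ := hgdvd
    apply hg1
    rw [hh, eval_mul, eval_sub, eval_X, eval_one, sub_self, zero_mul]
  -- assemble
  have hT : (∑ k ∈ Finset.range N, ((-1 : ℂ) ^ k * e k) •
      (Q ^ (N - 1 - k) - Pim)) = G - g.eval 1 • Pim := by
    simp_rw [smul_sub]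
    rw [Finset.sum_sub_distrib, ← hGsum, ← Finset.sum_smul, ← hg1sum]
  rw [hT]
  have hM : ∀ x y, (G - g.eval 1 • Pim) x y = 0 := by
    intro x y
    have hQM : Q * (G - g.eval 1 • Pim) = G - g.eval 1 • Pim := by
      rw [mul_sub, hQG, mul_smul_comm, hQPi]
    have hPiM : Pim * (G - g.eval 1 • Pim) = 0 := by
      rw [mul_sub, hPiG, mul_smul_comm, hPiPi, sub_self]
    have hcol := KEY (fun z => (G - g.eval 1 • Pim) z y) ?_ ?_
    · exact congrFun hcol x
    · funext x'
      have := congrFun (congrFun hQM x') y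
      simpa [Matrix.mulVec, dotProduct, mul_apply] using this
    · have := congrFun (congrFun hPiM flast) y
      simpa [mul_apply, hPidef] using this
  ext x y
  exact hM x y
end

section
/- Under the hypotheses of the previous statement (P Markov with eigenvalues β_1,...,β_{N-1} ≠ 1 and β_N = 1, stationary π, Π the matrix of rows π), let C be the companion matrix of g(x) = (x-β_1)···(x-β_{N-1}). Then for all t ≥ 0, P^t - Π = Σ_{k=0}^{N-2} C^t(k+1, 1) (P^k - Π). -/
open Polynomial Matrix

lemma auxPSPC_charpoly_transpose {n : Type*} [Fintype n] [DecidableEq n] {R : Type*} [CommRing R]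
    (M : Matrix n n R) : Mᵀ.charpoly = M.charpoly := by
  rw [Matrix.charpoly, Matrix.charpoly, ← Matrix.det_transpose (charmatrix M)]
  congr 1
  ext i j
  by_cases h : i = j
  · subst h; simp [charmatrix_apply_eq]
  · rw [Matrix.transpose_apply, charmatrix_apply_ne _ _ _ h,
      charmatrix_apply_ne _ _ _ (Ne.symm h), Matrix.transpose_apply]

lemma auxPSPC_finrank_ker_le {n : Type*} [Fintype n] [DecidableEq n] (M : Matrix n n ℂ)
    (h : M.charpoly.natTrailingDegree ≤ 1) :
    Module.finrank ℂ (LinearMap.ker M.mulVecLin) ≤ 1 := by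
  have hch : (Matrix.mulVecLin M : Module.End ℂ (n → ℂ)).charpoly = M.charpoly := by
    rw [← LinearMap.charpoly_toMatrix (M.mulVecLin) (Pi.basisFun ℂ n),
      LinearMap.toMatrix_eq_toMatrix', ← Matrix.toLin'_apply', LinearMap.toMatrix'_toLin']
  calc Module.finrank ℂ (LinearMap.ker M.mulVecLin)
      ≤ Module.finrank ℂ (Module.End.maxGenEigenspace (show Module.End ℂ (n → ℂ) from M.mulVecLin) 0) := by
        apply Submodule.finrank_mono
        intro x hx
        rw [Module.End.mem_maxGenEigenspace]
        exact ⟨1, by simpa using hx⟩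
    _ = M.charpoly.natTrailingDegree := by
        rw [LinearMap.finrank_maxGenEigenspace_zero_eq, hch]
    _ ≤ 1 := h

lemma auxPSPC_charpoly_sub_one {n : Type*} [Fintype n] [DecidableEq n] (M : Matrix n n ℂ)
    {ι : Type*} (s : Finset ι) (b : ι → ℂ) (hM : M.charpoly = ∏ j ∈ s, (X - C (b j))) :
    (M - 1).charpoly = ∏ j ∈ s, (X - C (b j - 1)) := by
  have key : charmatrix (M - 1) = (charmatrix M).map (aeval (X + 1 : ℂ[X])).toRingHom := by
    ext i j
    by_cases h : i = j
    · subst h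
      simp only [charmatrix_apply_eq, Matrix.sub_apply, Matrix.one_apply_eq, Matrix.map_apply,
        AlgHom.toRingHom_eq_coe, RingHom.coe_coe, map_sub, aeval_X, aeval_C]
      simp [Algebra.algebraMap_eq_smul_one, C_sub]
      ring
    · simp only [charmatrix_apply_ne _ _ _ h, Matrix.sub_apply, Matrix.one_apply_ne h,
        Matrix.map_apply, AlgHom.toRingHom_eq_coe, RingHom.coe_coe, map_neg, aeval_C]
      simp [Algebra.algebraMap_eq_smul_one]
  rw [Matrix.charpoly, key, ← RingHom.mapMatrix_apply, ← RingHom.map_det, ← Matrix.charpoly, hM, map_prod]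
  refine Finset.prod_congr rfl fun j _ => ?_
  simp only [AlgHom.toRingHom_eq_coe, RingHom.coe_coe, map_sub, aeval_X, aeval_C]
  simp [Algebra.algebraMap_eq_smul_one, C_sub]
  ring

lemma auxPSPC_ntd {ι : Type*} [DecidableEq ι] (s : Finset ι) (b : ι → ℂ) (j0 : ι) (hj0 : j0 ∈ s)
    (hb0 : b j0 = 0) (hbne : ∀ j ∈ s, j ≠ j0 → b j ≠ 0) :
    (∏ j ∈ s, (X - C (b j))).natTrailingDegree = 1 := by
  rw [← Finset.prod_erase_mul s _ hj0, hb0, map_zero, sub_zero]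
  set h := ∏ j ∈ s.erase j0, (X - C (b j)) with hh
  have h0 : h.coeff 0 ≠ 0 := by
    rw [coeff_zero_eq_eval_zero, hh, eval_prod]
    rw [Finset.prod_ne_zero_iff]
    intro j hj
    simp only [eval_sub, eval_X, eval_C, zero_sub, neg_ne_zero]
    exact hbne j (Finset.mem_of_mem_erase hj) (Finset.ne_of_mem_erase hj)
  have hne0 : h ≠ 0 := fun hc => h0 (by simp [hc])
  rw [natTrailingDegree_mul hne0 X_ne_zero, natTrailingDegree_X]
  have : h.natTrailingDegree = 0 := natTrailingDegree_eq_zero.mpr (Or.inr h0)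
  omega

lemma auxPSPC_row_eq {n : Type*} [Fintype n] [DecidableEq n] (A : Matrix n n ℂ) (p0 : n → ℂ)
    (hker : Module.finrank ℂ (LinearMap.ker (Matrix.mulVecLin A)) ≤ 1)
    (hp : A *ᵥ p0 = 0) (hps : ∑ i, p0 i = 1)
    (r : n → ℂ) (hr : A *ᵥ r = 0) : r = (∑ i, r i) • p0 := by
  have hpmem : p0 ∈ LinearMap.ker (Matrix.mulVecLin A) := by
    simpa [LinearMap.mem_ker, Matrix.mulVecLin_apply] using hp
  have hpne : p0 ≠ 0 := by
    intro h
    rw [h] at hps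
    simp at hps
  have hspan : Submodule.span ℂ {p0} ≤ LinearMap.ker (Matrix.mulVecLin A) :=
    Submodule.span_le.mpr (by simpa using hpmem)
  have hkereq : LinearMap.ker (Matrix.mulVecLin A) = Submodule.span ℂ {p0} := by
    refine (Submodule.eq_of_le_of_finrank_le hspan ?_).symm
    rw [finrank_span_singleton hpne]
    exact hker
  have hrmem : r ∈ Submodule.span ℂ ({p0} : Set (n → ℂ)) := by
    rw [← hkereq]
    simpa [LinearMap.mem_ker, Matrix.mulVecLin_apply] using hr
  obtain ⟨c, hc⟩ := Submodule.mem_span_singleton.mp hrmem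
  have hcval : c = ∑ i, r i := by
    have : ∑ i, r i = ∑ i, c * p0 i := by
      rw [← hc]; rfl
    rw [this, ← Finset.mul_sum, hps, mul_one]
  rw [← hcval, ← hc]

/-- Proposition 5.2 of the paper: with `C` the companion matrix of
`g(x) = (x-β_1)⋯(x-β_{N-1})`, one has `P^t - Π = ∑_{k=0}^{N-2} C^t(k+1,1) (P^k - Π)`
for all `t ≥ 0`.  Matrix indices of `C` here are 0-based, so the paper's `C^t(k+1,1)`
is `(C ^ t) k ⟨0⟩`. -/
theorem pow_sub_pi_companion (N : ℕ) (hN : 2 ≤ N)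
    (P : Matrix (Fin N) (Fin N) ℝ) (piv : Fin N → ℝ)
    (hP0 : ∀ i j, 0 ≤ P i j) (hProw : ∀ i, ∑ j, P i j = 1)
    (hpiv0 : ∀ i, 0 ≤ piv i) (hpiv1 : ∑ i, piv i = 1)
    (hstat : ∀ j, ∑ i, piv i * P i j = piv j)
    (β : Fin N → ℂ)
    (hchar : (P.map (fun a => (a : ℂ))).charpoly
      = ∏ j, (Polynomial.X - Polynomial.C (β j)))
    (hlast : ∀ j : Fin N, (j : ℕ) = N - 1 → β j = 1)
    (hne : ∀ j : Fin N, (j : ℕ) < N - 1 → β j ≠ 1)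
    (C : Matrix (Fin (N - 1)) (Fin (N - 1)) ℂ)
    (hC : ∀ i j : Fin (N - 1), C i j =
      if (i : ℕ) = (j : ℕ) + 1 then 1
      else if (j : ℕ) = N - 2 then
        (-1 : ℂ) ^ (N - 2 - (i : ℕ)) *
          (∑ S ∈ (Finset.univ.filter (fun l : Fin N => (l : ℕ) < N - 1)).powersetCard
              (N - 1 - (i : ℕ)),
            ∏ l ∈ S, β l)
      else 0)
    (t : ℕ) :
    (P.map (fun a => (a : ℂ))) ^ t - Matrix.of (fun _ y => (piv y : ℂ))
      = ∑ k : Fin (N - 1), (C ^ t) k ⟨0, by omega⟩ •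
          ((P.map (fun a => (a : ℂ))) ^ (k : ℕ) - Matrix.of (fun _ y => (piv y : ℂ))) := by
  classical
  set Q : Matrix (Fin N) (Fin N) ℂ := P.map (fun a => (a : ℂ)) with hQdef
  set Pi0 : Matrix (Fin N) (Fin N) ℂ := Matrix.of (fun _ y => (piv y : ℂ)) with hPidef
  set s : Finset (Fin N) := Finset.univ.filter (fun l : Fin N => (l : ℕ) < N - 1) with hsdef
  set z : Fin (N - 1) := ⟨0, by omega⟩ with hzdef
  -- basic stochastic facts
  have hQrow : ∀ i, ∑ j, Q i j = 1 := by
    intro i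
    rw [hQdef]
    simp only [Matrix.map_apply]
    rw [← Complex.ofReal_sum, hProw i, Complex.ofReal_one]
  have hstatC : ∀ j, ∑ i, (piv i : ℂ) * Q i j = (piv j : ℂ) := by
    intro j
    rw [hQdef]
    simp only [Matrix.map_apply]
    exact_mod_cast congrArg (fun x : ℝ => (x : ℂ)) (hstat j)
  have hpivsC : ∑ i, (piv i : ℂ) = 1 := by
    rw [← Complex.ofReal_sum, hpiv1, Complex.ofReal_one]
  have hQPi : Q * Pi0 = Pi0 := by
    ext i j
    rw [Matrix.mul_apply]
    simp only [hPidef, Matrix.of_apply]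
    rw [← Finset.sum_mul, hQrow i, one_mul]
  have hPiQ : Pi0 * Q = Pi0 := by
    ext i j
    rw [Matrix.mul_apply]
    simp only [hPidef, Matrix.of_apply]
    exact hstatC j
  -- splitting the characteristic polynomial
  have hlt : N - 1 < N := by omega
  set lastIdx : Fin N := ⟨N - 1, hlt⟩ with hlastdef
  have hcompl : Finset.univ.filter (fun l : Fin N => ¬ (l : ℕ) < N - 1) = {lastIdx} := by
    ext l
    simp only [Finset.mem_filter, Finset.mem_univ, true_and, Finset.mem_singleton, not_lt]
    constructor
    · intro hl
      have h2 := l.isLt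
      exact Fin.ext (show (l : ℕ) = N - 1 by omega)
    · intro hl
      subst hl
      have h3 : (lastIdx : ℕ) = N - 1 := rfl
      omega
  have hβlast : β lastIdx = 1 := hlast lastIdx rfl
  set g : ℂ[X] := ∏ j ∈ s, (X - Polynomial.C (β j)) with hgdef
  have hsplit : Q.charpoly = g * (X - Polynomial.C 1) := by
    rw [hchar, ← Finset.prod_filter_mul_prod_filter_not Finset.univ
      (fun l : Fin N => (l : ℕ) < N - 1) (fun j => X - Polynomial.C (β j))]
    congr 1
    rw [hcompl, Finset.prod_singleton, hβlast]
  have hcard : s.card = N - 1 := by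
    have h2 := Finset.card_filter_add_card_filter_not
      (s := (Finset.univ : Finset (Fin N))) (p := fun l : Fin N => (l : ℕ) < N - 1)
    rw [hcompl, ← hsdef] at h2
    simp only [Finset.card_singleton, Finset.card_univ, Fintype.card_fin] at h2
    omega
  have hgmonic : g.Monic := monic_prod_of_monic _ _ fun j _ => monic_X_sub_C _
  have hgdeg : g.natDegree = N - 1 := by
    rw [hgdef, natDegree_prod_of_monic _ _ fun j _ => monic_X_sub_C _]
    simp [natDegree_X_sub_C, hcard]
  -- Cayley-Hamilton
  set G : Matrix (Fin N) (Fin N) ℂ := aeval Q g with hGdef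
  have hGQ : G * Q = G := by
    have hCH := Matrix.aeval_self_charpoly Q
    rw [hsplit, _root_.map_mul] at hCH
    have h0 : G * (Q - 1) = 0 := by
      simpa [hGdef, map_sub, aeval_X, aeval_C] using hCH
    rw [mul_sub, mul_one, sub_eq_zero] at h0
    exact h0
  set g1 : ℂ := g.eval 1 with hg1def
  have hg1ne : g1 ≠ 0 := by
    rw [hg1def, hgdef, eval_prod]
    rw [Finset.prod_ne_zero_iff]
    intro j hj
    simp only [eval_sub, eval_X, eval_C]
    rw [hsdef] at hj
    simp only [Finset.mem_filter, Finset.mem_univ, true_and] at hj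
    exact sub_ne_zero.mpr (Ne.symm (hne j hj))
  -- kernel bound for transpose
  have hQT : (Qᵀ - 1).charpoly = ∏ j : Fin N, (X - Polynomial.C (β j - 1)) :=
    auxPSPC_charpoly_sub_one Qᵀ Finset.univ β
      (by rw [auxPSPC_charpoly_transpose, hchar])
  have hntd : (Qᵀ - 1).charpoly.natTrailingDegree = 1 := by
    rw [hQT]
    refine auxPSPC_ntd Finset.univ (fun j => β j - 1) lastIdx (Finset.mem_univ _)
      (by show β lastIdx - 1 = 0; rw [hβlast]; ring) ?_
    intro j _ hj
    refine sub_ne_zero.mpr (hne j ?_)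
    have h1 := j.isLt
    have h2 : (j : ℕ) ≠ N - 1 := fun h => hj (Fin.ext (by simpa using h))
    omega
  have hker : Module.finrank ℂ (LinearMap.ker (Matrix.mulVecLin (Qᵀ - 1))) ≤ 1 :=
    auxPSPC_finrank_ker_le _ (le_of_eq hntd)
  have hπker : (Qᵀ - 1) *ᵥ (fun i => (piv i : ℂ)) = 0 := by
    funext j
    simp only [Matrix.sub_mulVec, Pi.sub_apply, Matrix.one_mulVec, Pi.zero_apply]
    rw [sub_eq_zero]
    simp only [Matrix.mulVec, dotProduct, Matrix.transpose_apply]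
    rw [← hstatC j]
    exact Finset.sum_congr rfl fun k _ => mul_comm _ _
  -- row sums of powers of Q
  have hrowsum : ∀ (k : ℕ) (i : Fin N), ∑ j, (Q ^ k) i j = 1 := by
    intro k
    induction k with
    | zero => intro i; simp [Matrix.one_apply]
    | succ k ih =>
      intro i
      rw [pow_succ']
      calc ∑ j, (Q * Q ^ k) i j = ∑ j, ∑ l, Q i l * (Q ^ k) l j := by
            simp [Matrix.mul_apply]
        _ = ∑ l, ∑ j, Q i l * (Q ^ k) l j := Finset.sum_comm
        _ = ∑ l, Q i l * ∑ j, (Q ^ k) l j := by simp [Finset.mul_sum]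
        _ = ∑ l, Q i l := by simp [ih]
        _ = 1 := hQrow i
  have hGsum : G = ∑ k ∈ Finset.range N, g.coeff k • Q ^ k := by
    rw [hGdef]
    exact aeval_eq_sum_range' (by rw [hgdeg]; omega) Q
  have hEval1 : ∑ k ∈ Finset.range N, g.coeff k = g1 := by
    rw [hg1def]
    have h9 := eval_eq_sum_range' (p := g) (show g.natDegree < N by omega) 1
    simpa using h9.symm
  have hGrowsum : ∀ i, ∑ j, G i j = g1 := by
    intro i
    rw [hGsum]
    simp only [Matrix.sum_apply, Matrix.smul_apply, smul_eq_mul]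
    rw [Finset.sum_comm]
    calc ∑ k ∈ Finset.range N, ∑ j, g.coeff k * (Q ^ k) i j
        = ∑ k ∈ Finset.range N, g.coeff k * ∑ j, (Q ^ k) i j := by
          simp [Finset.mul_sum]
      _ = ∑ k ∈ Finset.range N, g.coeff k := by simp [hrowsum]
      _ = g1 := hEval1
  set M0 : Matrix (Fin N) (Fin N) ℂ := G - g1 • Pi0 with hM0def
  have hM0Q : M0 * Q = M0 := by
    rw [hM0def, sub_mul, hGQ, Matrix.smul_mul, hPiQ]
  have hM0rowsum : ∀ i, ∑ j, M0 i j = 0 := by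
    intro i
    simp only [hM0def, Matrix.sub_apply, Matrix.smul_apply, smul_eq_mul, hPidef,
      Matrix.of_apply]
    rw [Finset.sum_sub_distrib, hGrowsum i, ← Finset.mul_sum, hpivsC, mul_one, sub_self]
  have hM0zero : M0 = 0 := by
    ext i j
    have h1 : ∀ j', ∑ k, Q k j' * M0 i k = M0 i j' := by
      intro j'
      have h2 := congrFun (congrFun hM0Q i) j'
      rw [Matrix.mul_apply] at h2
      calc ∑ k, Q k j' * M0 i k = ∑ k, M0 i k * Q k j' :=
            Finset.sum_congr rfl fun k _ => mul_comm _ _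
        _ = M0 i j' := h2
    have hr : (Qᵀ - 1) *ᵥ (fun j' => M0 i j') = 0 := by
      funext j'
      simp only [Matrix.sub_mulVec, Pi.sub_apply, Matrix.one_mulVec, Pi.zero_apply]
      rw [sub_eq_zero]
      simp only [Matrix.mulVec, dotProduct, Matrix.transpose_apply]
      exact h1 j'
    have h3 := auxPSPC_row_eq (Qᵀ - 1) (fun i => (piv i : ℂ)) hker hπker hpivsC _ hr
    rw [hM0rowsum i] at h3
    have h4 := congrFun h3 j
    simpa using h4
  have hGeq : G = g1 • Pi0 := by
    have h5 := hM0zero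
    rw [hM0def] at h5
    exact sub_eq_zero.mp h5
  -- Vieta coefficients
  have hcoeff : ∀ m : ℕ, m ≤ N - 1 → g.coeff m =
      (-1 : ℂ) ^ (N - 1 - m) * ∑ S ∈ s.powersetCard (N - 1 - m), ∏ l ∈ S, β l := by
    intro m hm
    have hcard' : Multiset.card (s.val.map β) = N - 1 := by
      rw [Multiset.card_map]
      exact_mod_cast hcard
    have hv := Multiset.prod_X_sub_C_coeff (s.val.map β) (k := m) (by rw [hcard']; exact hm)
    rw [Multiset.map_map, hcard', Finset.esymm_map_val] at hv
    rw [hgdef, Finset.prod_eq_multiset_prod]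
    convert hv using 3 <;> rfl
  have hcoefftop : g.coeff (N - 1) = 1 := by
    have h5 := hgmonic.coeff_natDegree
    rwa [hgdeg] at h5
  have hzero : ∑ k ∈ Finset.range N, g.coeff k • (Q ^ k - Pi0) = 0 := by
    have h1 : ∑ k ∈ Finset.range N, g.coeff k • (Q ^ k - Pi0)
        = (∑ k ∈ Finset.range N, g.coeff k • Q ^ k)
          - (∑ k ∈ Finset.range N, g.coeff k) • Pi0 := by
      rw [Finset.sum_smul, ← Finset.sum_sub_distrib]
      exact Finset.sum_congr rfl fun k _ => smul_sub _ _ _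
    rw [h1, ← hGsum, hEval1, hGeq, sub_self]
  have hQB : ∀ k : ℕ, Q * (Q ^ k - Pi0) = Q ^ (k + 1) - Pi0 := by
    intro k
    rw [mul_sub, hQPi, ← pow_succ']
  have hN2 : N - 2 + 1 = N - 1 := by omega
  have hcol : ∀ j : Fin (N - 1),
      ∑ i : Fin (N - 1), C i j • (Q ^ (i : ℕ) - Pi0) = Q * (Q ^ (j : ℕ) - Pi0) := by
    intro j
    by_cases hj : (j : ℕ) = N - 2
    · have hCval : ∀ i : Fin (N - 1), C i j = - g.coeff (i : ℕ) := by
        intro i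
        have hi := i.isLt
        rw [hC i j, if_neg (by omega), if_pos hj, hcoeff (i : ℕ) (by omega)]
        have h5 : N - 1 - (i : ℕ) = (N - 2 - (i : ℕ)) + 1 := by omega
        rw [h5, pow_succ]
        ring
      have h8 : Finset.range N = Finset.range ((N - 1) + 1) := by
        congr 1
        omega
      have h7 := hzero
      rw [h8, Finset.sum_range_succ] at h7
      calc ∑ i : Fin (N - 1), C i j • (Q ^ (i : ℕ) - Pi0)
          = ∑ i : Fin (N - 1), -(g.coeff (i : ℕ) • (Q ^ (i : ℕ) - Pi0)) := by
            refine Finset.sum_congr rfl fun i _ => ?_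
            rw [hCval i, neg_smul]
        _ = -∑ i : Fin (N - 1), g.coeff (i : ℕ) • (Q ^ (i : ℕ) - Pi0) := by
            rw [Finset.sum_neg_distrib]
        _ = -∑ k ∈ Finset.range (N - 1), g.coeff k • (Q ^ k - Pi0) := by
            rw [Fin.sum_univ_eq_sum_range (fun k => g.coeff k • (Q ^ k - Pi0)) (N - 1)]
        _ = g.coeff (N - 1) • (Q ^ (N - 1) - Pi0) := by
            have h10 : ∑ k ∈ Finset.range (N - 1), g.coeff k • (Q ^ k - Pi0)
                = -(g.coeff (N - 1) • (Q ^ (N - 1) - Pi0)) := by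
              exact eq_neg_of_add_eq_zero_left h7
            rw [h10, neg_neg]
        _ = Q * (Q ^ (j : ℕ) - Pi0) := by
            rw [hcoefftop, one_smul, hQB, hj, hN2]
    · have hjlt : (j : ℕ) < N - 2 := by
        have := j.isLt
        omega
      have hCval : ∀ i : Fin (N - 1), C i j = if (i : ℕ) = (j : ℕ) + 1 then 1 else 0 := by
        intro i
        rw [hC i j]
        by_cases hi : (i : ℕ) = (j : ℕ) + 1
        · rw [if_pos hi, if_pos hi]
        · rw [if_neg hi, if_neg hi, if_neg hj]
      rw [Finset.sum_eq_single (⟨(j : ℕ) + 1, by omega⟩ : Fin (N - 1))]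
      · rw [hCval, if_pos rfl, one_smul, hQB]
      · intro i _ hine
        rw [hCval, if_neg, zero_smul]
        intro hival
        exact hine (Fin.ext (by simpa using hival))
      · intro h
        exact absurd (Finset.mem_univ _) h
  have key : ∀ t : ℕ, ∑ k : Fin (N - 1), (C ^ t) k z • (Q ^ (k : ℕ) - Pi0) = Q ^ t - Pi0 := by
    intro t
    induction t with
    | zero =>
      rw [pow_zero, pow_zero]
      rw [Finset.sum_eq_single z]
      · have hz0 : (z : ℕ) = 0 := rfl
        rw [Matrix.one_apply_eq, one_smul, hz0, pow_zero]
      · intro i _ hine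
        rw [Matrix.one_apply_ne hine, zero_smul]
      · intro h
        exact absurd (Finset.mem_univ z) h
    | succ t ih =>
      rw [pow_succ' C t]
      calc ∑ k : Fin (N - 1), (C * C ^ t) k z • (Q ^ (k : ℕ) - Pi0)
          = ∑ k : Fin (N - 1), ∑ j : Fin (N - 1),
              (C k j * (C ^ t) j z) • (Q ^ (k : ℕ) - Pi0) := by
            refine Finset.sum_congr rfl fun k _ => ?_
            rw [Matrix.mul_apply, Finset.sum_smul]
        _ = ∑ j : Fin (N - 1), ∑ k : Fin (N - 1),
              (C ^ t) j z • (C k j • (Q ^ (k : ℕ) - Pi0)) := by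
            rw [Finset.sum_comm]
            exact Finset.sum_congr rfl fun j _ => Finset.sum_congr rfl fun k _ => by
              rw [smul_smul, mul_comm]
        _ = ∑ j : Fin (N - 1), (C ^ t) j z • (Q * (Q ^ (j : ℕ) - Pi0)) := by
            refine Finset.sum_congr rfl fun j _ => ?_
            rw [← Finset.smul_sum, hcol j]
        _ = Q * ∑ j : Fin (N - 1), (C ^ t) j z • (Q ^ (j : ℕ) - Pi0) := by
            rw [Finset.mul_sum]
            exact Finset.sum_congr rfl fun j _ => (mul_smul_comm _ _ _).symm
        _ = Q ^ (t + 1) - Pi0 := by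
          rw [ih, mul_sub, hQPi, ← pow_succ']
  exact (key t).symm
end

section
/- Let P be a Markov transition matrix on a state space of size N with absolute spectral gap 1 - β_⋆ > 0, relaxation time t_rel = 1/(1-β_⋆), and unique stationary distribution π. For every 0 < ε < 1, the total variation mixing time satisfies t_mix(ε) ≤ 2N·t_rel·log(t_rel) + 4(1+log 2)·N·t_rel + 2(log(1/ε) - 1)·t_rel. -/
set_option maxHeartbeats 1600000

open Polynomial Finset Matrix

noncomputable def hcoef (b : ℕ → ℂ) : ℕ → ℕ → ℂ
  | 0, _ => 1
  | m+1, 0 => b 0 * hcoef b m 0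
  | m+1, k+1 => hcoef b (m+1) k + b (k+1) * hcoef b m (k+1)
termination_by m k => (m, k)

lemma hcoef_bound (b : ℕ → ℂ) (s : ℝ) (K : ℕ) (hs : 0 ≤ s)
    (hb : ∀ j, j ≤ K → ‖b j‖ ≤ s) :
    ∀ m k, k ≤ K → ‖hcoef b m k‖ ≤ ((m + k).choose k) * s ^ m := by
  intro m
  induction m with
  | zero =>
    intro k hk
    simp [hcoef, Nat.choose_self]
  | succ m ih =>
    intro k
    induction k with
    | zero =>
      intro hk
      simp only [hcoef, norm_mul]
      calc ‖b 0‖ * ‖hcoef b m 0‖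
          ≤ s * (((m + 0).choose 0) * s ^ m) := by
            apply mul_le_mul (hb 0 hk) (ih 0 hk) (norm_nonneg _) hs
        _ = ((m + 1 + 0).choose 0) * s ^ (m + 1) := by
            simp [Nat.choose_zero_right]; ring
    | succ k ihk =>
      intro hk
      have h1 := ihk (le_trans (Nat.le_succ k) hk)
      have h2 := ih (k+1) hk
      calc ‖hcoef b (m+1) (k+1)‖
          ≤ ‖hcoef b (m+1) k‖ + ‖b (k+1) * hcoef b m (k+1)‖ := by
            rw [hcoef]; exact norm_add_le _ _
        _ ≤ ((m + 1 + k).choose k) * s ^ (m+1) + s * (((m + (k+1)).choose (k+1)) * s ^ m) := by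
            refine add_le_add h1 ?_
            rw [norm_mul]
            exact mul_le_mul (hb (k+1) hk) h2 (norm_nonneg _) hs
        _ = (((m + 1 + k).choose k) + ((m + (k+1)).choose (k+1))) * s ^ (m+1) := by ring
        _ = ((m + 1 + (k+1)).choose (k+1)) * s ^ (m+1) := by
            have e1 : m + 1 + (k + 1) = (m + 1 + k) + 1 := by omega
            have e2 : m + (k+1) = m + 1 + k := by omega
            rw [e1, e2, Nat.choose_succ_succ']
            push_cast
            ring


lemma eigvec_const {n : ℕ} (A : Matrix (Fin n) (Fin n) ℂ) (q : Polynomial ℂ)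
    (hq : A.charpoly = (X - C 1) * q) (hq1 : q.eval 1 ≠ 0)
    (h1 : A.mulVec (fun _ => 1) = (fun _ => 1))
    (v : Fin n → ℂ) (hv : A.mulVec v = v) (i₀ i₁ : Fin n) : v i₀ = v i₁ := by
  classical
  by_contra hne
  have hn2 : 1 < n := by
    by_contra h
    interval_cases n
    · exact i₀.elim0
    · exact hne (congrArg v (Subsingleton.elim i₀ i₁))
  set B : Matrix (Fin n) (Fin n) ℂ := 1 - A with hB
  -- kernel vectors
  have hBw : ∀ c : ℂ, B.mulVec (v - fun _ => c) = 0 := by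
    intro c
    have : (v - fun _ => c) = v - c • (fun _ => (1:ℂ)) := by
      funext x; simp [Pi.sub_apply]
    rw [this, hB, Matrix.sub_mulVec, Matrix.one_mulVec, Matrix.mulVec_sub,
      Matrix.mulVec_smul, hv, h1]
    abel
  -- adjugate of B vanishes
  have hadj : B.adjugate = 0 := by
    ext i j
    rw [Matrix.adjugate_apply, Matrix.zero_apply]
    rw [← Matrix.exists_mulVec_eq_zero_iff]
    refine ⟨v - fun _ => v i, ?_, ?_⟩
    · intro h0
      apply hne
      have e0 : v i₀ - v i = 0 := by
        have := congrFun h0 i₀; simpa using this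
      have e1 : v i₁ - v i = 0 := by
        have := congrFun h0 i₁; simpa using this
      have : v i₀ = v i := by linear_combination e0
      rw [this]
      linear_combination -e1
    · funext l
      have happ : ∀ (w : Fin n → ℂ),
          (B.updateRow j (Pi.single i 1)).mulVec w l
            = (B.updateRow j (Pi.single i 1)) l ⬝ᵥ w := fun _ => rfl
      by_cases hl : l = j
      · subst hl
        rw [happ, Matrix.updateRow_self, single_dotProduct]
        simp
      · rw [happ, Matrix.updateRow_ne hl]
        exact congrFun (hBw (v i)) l
  -- polynomial contradiction
  let φ : Polynomial ℂ →+* ℂ := Polynomial.evalRingHom 1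
  have hmap : φ.mapMatrix (Matrix.charmatrix A) = B := by
    ext i j
    by_cases hij : i = j
    · subst hij
      simp [φ, Matrix.charmatrix_apply_eq, hB, Matrix.one_apply]
    · simp [φ, Matrix.charmatrix_apply_ne _ _ _ hij, hB, Matrix.one_apply_ne hij]
  have hadjmap : φ.mapMatrix ((Matrix.charmatrix A).adjugate) = 0 := by
    rw [RingHom.map_adjugate, hmap, hadj]
  -- each entry of adjugate charmatrix is divisible by X - C 1
  have hdvd : ∀ i j, (X - C 1) ∣ (Matrix.charmatrix A).adjugate i j := by
    intro i j
    rw [dvd_iff_isRoot]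
    have := congrFun (congrFun hadjmap i) j
    simpa [φ, Polynomial.IsRoot] using this
  choose E hE using fun i j => hdvd i j
  have hEtot : (Matrix.charmatrix A).adjugate = (X - C 1 : Polynomial ℂ) • (Matrix.of E) := by
    refine Matrix.ext fun i j => ?_
    rw [Matrix.smul_apply]
    exact hE i j
  have hdet : ((Matrix.charmatrix A).adjugate).det
      = ((X - C 1) * q) ^ (n - 1) := by
    rw [Matrix.det_adjugate]
    have : (Matrix.charmatrix A).det = A.charpoly := rfl
    rw [this, hq]
    simp
  have hdet2 : ((Matrix.charmatrix A).adjugate).det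
      = (X - C 1) ^ n * (Matrix.of E).det := by
    rw [hEtot, Matrix.det_smul]
    simp
  have hcancel : q ^ (n - 1) = (X - C 1) * (Matrix.of E).det := by
    have hXne : (X - C (1:ℂ)) ^ (n-1) ≠ 0 := pow_ne_zero _ (X_sub_C_ne_zero 1)
    have hn1 : n = (n - 1) + 1 := by omega
    apply mul_left_cancel₀ hXne
    calc (X - C 1) ^ (n-1) * q ^ (n-1)
        = ((X - C 1) * q) ^ (n - 1) := (mul_pow _ _ _).symm
      _ = (X - C 1) ^ n * (Matrix.of E).det := by rw [← hdet, hdet2]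
      _ = (X - C 1) ^ (n-1) * ((X - C 1) * (Matrix.of E).det) := by
          rw [show (X - C (1:ℂ))^n = (X - C 1)^(n-1) * (X - C 1) by rw [← pow_succ, ← hn1]]
          ring
  have : (q.eval 1) ^ (n - 1) = 0 := by
    have := congrArg (Polynomial.eval 1) hcancel
    simpa using this
  exact hq1 ((pow_eq_zero_iff (show n - 1 ≠ 0 by omega)).mp this)



lemma term_bound (t k M : ℕ) (βs R : ℝ) (hβs0 : 0 ≤ βs) (hβs1 : βs < 1)
    (hR : R = 1/(1 - βs)) (hkM : k ≤ M) (hkt : k ≤ t) :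
    (t.choose k : ℝ) * βs ^ (t - k) * 2 ^ (k+1)
      ≤ 2 * (4 * Real.exp 1 * R) ^ M * Real.exp (-((t:ℝ) * (1 - βs))/2) := by
  set g : ℝ := 1 - βs with hgdef
  have hg0 : 0 < g := by simp only [hgdef]; linarith
  have hg1 : g ≤ 1 := by simp only [hgdef]; linarith
  have hR0 : 0 < R := by rw [hR]; positivity
  have hR1 : 1 ≤ R := by rw [hR]; exact one_le_one_div hg0 hg1
  have hRg : R * g = 1 := by rw [hR]; field_simp
  have s1 : (t.choose k : ℝ) ≤ (t:ℝ)^k / (k.factorial : ℝ) := Nat.choose_le_pow_div k t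
  have s2 : βs ^ (t-k) ≤ Real.exp (-(((t:ℝ) - k) * g)) := by
    have hβe : βs ≤ Real.exp (-g) := by
      have := Real.add_one_le_exp (-g)
      simp only [hgdef] at this ⊢
      linarith
    calc βs^(t-k) ≤ (Real.exp (-g))^(t-k) := pow_le_pow_left₀ hβs0 hβe _
      _ = Real.exp (((t-k : ℕ):ℝ) * (-g)) := (Real.exp_nat_mul _ _).symm
      _ = Real.exp (-(((t:ℝ) - k) * g)) := by
          rw [Nat.cast_sub hkt]
          ring_nf
  have s3 : (t:ℝ)^k * Real.exp (-((t:ℝ)*g)/2) ≤ (2*k*R)^k * Real.exp (-(k:ℝ)) := by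
    rcases Nat.eq_zero_or_pos k with hk0 | hkpos
    · subst hk0
      simp only [pow_zero, Nat.cast_zero, neg_zero, Real.exp_zero, one_mul, mul_one]
      rw [Real.exp_le_one_iff]
      have h2 : (0:ℝ) ≤ (t:ℝ) * g := by positivity
      nlinarith [h2]
    · have hkR : (0:ℝ) < (k:ℝ) := by exact_mod_cast hkpos
      set x : ℝ := (t:ℝ)*g/(2*k) with hxdef
      have hx0 : 0 ≤ x := by positivity
      have ht_eq : (t:ℝ) = 2*k*R*x := by
        rw [hxdef]
        field_simp
        calc (t:ℝ) = t * (R * g) := by rw [hRg]; ring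
          _ = t*R*g := by ring
      have hkx : (k:ℝ) * x = (t:ℝ)*g/2 := by
        rw [hxdef]
        field_simp
      have hxe : x ^ k ≤ Real.exp ((k:ℝ)*x - k) := by
        have h1 : x ≤ Real.exp (x - 1) := by
          have := Real.add_one_le_exp (x - 1)
          linarith
        calc x^k ≤ (Real.exp (x-1))^k := pow_le_pow_left₀ hx0 h1 _
          _ = Real.exp ((k:ℝ)*(x-1)) := (Real.exp_nat_mul _ _).symm
          _ = Real.exp ((k:ℝ)*x - k) := by ring_nf
      calc (t:ℝ)^k * Real.exp (-((t:ℝ)*g)/2)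
          = (2*k*R)^k * x^k * Real.exp (-((t:ℝ)*g)/2) := by
            rw [ht_eq, mul_pow]
        _ ≤ (2*k*R)^k * Real.exp ((k:ℝ)*x - k) * Real.exp (-((t:ℝ)*g)/2) := by
            have hp : (0:ℝ) ≤ (2*k*R)^k := by positivity
            have he : (0:ℝ) ≤ Real.exp (-((t:ℝ)*g)/2) := (Real.exp_pos _).le
            exact mul_le_mul_of_nonneg_right (mul_le_mul_of_nonneg_left hxe hp) he
        _ = (2*k*R)^k * Real.exp (-(k:ℝ)) := by
            rw [mul_assoc, ← Real.exp_add, hkx]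
            ring_nf
  have s4 : ((k:ℝ))^k ≤ (k.factorial : ℝ) * Real.exp k := by
    have h := Real.pow_div_factorial_le_exp (x := (k:ℝ)) (by positivity) k
    have hf : (0:ℝ) < (k.factorial : ℝ) := by exact_mod_cast k.factorial_pos
    calc ((k:ℝ))^k = ((k:ℝ)^k / k.factorial) * k.factorial := by field_simp
      _ ≤ Real.exp k * k.factorial := mul_le_mul_of_nonneg_right h hf.le
      _ = (k.factorial : ℝ) * Real.exp k := by ring
  have hf : (0:ℝ) < (k.factorial : ℝ) := by exact_mod_cast k.factorial_pos
  have s4' : ((k:ℝ)^k / (k.factorial:ℝ)) * Real.exp (-(k:ℝ)) ≤ 1 := by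
    rw [div_mul_eq_mul_div, div_le_one hf]
    calc ((k:ℝ))^k * Real.exp (-(k:ℝ)) ≤ ((k.factorial : ℝ) * Real.exp k) * Real.exp (-(k:ℝ)) :=
          mul_le_mul_of_nonneg_right s4 (Real.exp_pos _).le
      _ = (k.factorial : ℝ) := by rw [mul_assoc, ← Real.exp_add]; simp
  have s5 : Real.exp ((k:ℝ)*g) ≤ Real.exp 1 ^ k := by
    rw [← Real.exp_nat_mul]
    apply Real.exp_le_exp.mpr
    nlinarith [Nat.cast_nonneg (α := ℝ) k]
  have he1 : (1:ℝ) ≤ Real.exp 1 := by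
    have := Real.add_one_le_exp 1
    linarith
  have s6 : (1:ℝ) ≤ 4 * Real.exp 1 * R := by nlinarith
  calc (t.choose k : ℝ) * βs ^ (t - k) * 2 ^ (k+1)
      ≤ ((t:ℝ)^k / (k.factorial:ℝ)) * Real.exp (-(((t:ℝ) - k) * g)) * 2 ^ (k+1) := by
        gcongr
      _ = (2 * 2^k / (k.factorial:ℝ)) * ((t:ℝ)^k * Real.exp (-((t:ℝ)*g)/2))
            * Real.exp ((k:ℝ)*g) * Real.exp (-((t:ℝ)*g)/2) := by
        rw [show (-(((t:ℝ) - k) * g)) = (-((t:ℝ)*g)/2) + ((k:ℝ)*g) + (-((t:ℝ)*g)/2) by ring]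
        rw [Real.exp_add, Real.exp_add, pow_succ]
        ring
      _ ≤ (2 * 2^k / (k.factorial:ℝ)) * ((2*k*R)^k * Real.exp (-(k:ℝ)))
            * Real.exp ((k:ℝ)*g) * Real.exp (-((t:ℝ)*g)/2) := by
        have hc : (0:ℝ) ≤ 2 * 2^k / (k.factorial:ℝ) := by positivity
        have h1 := mul_le_mul_of_nonneg_left s3 hc
        have h2 := mul_le_mul_of_nonneg_right
          (mul_le_mul_of_nonneg_right h1 (Real.exp_pos ((k:ℝ)*g)).le)
          (Real.exp_pos (-((t:ℝ)*g)/2)).le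
        exact h2
      _ = 2 * (4*R)^k * (((k:ℝ)^k / (k.factorial:ℝ)) * Real.exp (-(k:ℝ)))
            * Real.exp ((k:ℝ)*g) * Real.exp (-((t:ℝ)*g)/2) := by
        have h4 : (4:ℝ)^k = 2^(k*2) := by
          rw [show (4:ℝ) = 2^2 by norm_num, ← pow_mul, Nat.mul_comm]
        rw [mul_pow, mul_pow]
        field_simp
        rw [mul_pow, h4]
        ring
      _ ≤ 2 * (4*R)^k * 1 * Real.exp 1 ^ k * Real.exp (-((t:ℝ)*g)/2) := by
        have hc : (0:ℝ) ≤ 2 * (4*R)^k := by positivity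
        have h1 := mul_le_mul_of_nonneg_left s4' hc
        have h2 := mul_le_mul (mul_le_mul_of_nonneg_left s4' hc) s5
          (Real.exp_pos _).le (by positivity)
        exact mul_le_mul_of_nonneg_right h2 (Real.exp_pos _).le
      _ = 2 * (4 * Real.exp 1 * R)^k * Real.exp (-((t:ℝ)*g)/2) := by
        rw [mul_pow, mul_pow]
        ring
      _ ≤ 2 * (4 * Real.exp 1 * R)^M * Real.exp (-((t:ℝ)*g)/2) := by
        have := pow_le_pow_right₀ s6 hkM
        nlinarith [Real.exp_pos (-((t:ℝ)*g)/2), this]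
      _ = 2 * (4 * Real.exp 1 * R) ^ M * Real.exp (-((t:ℝ) * (1 - βs))/2) := by
        rw [hgdef]


/-- Theorem 1.2 (main theorem): for any Markov transition matrix on `N` states with
absolute spectral gap `1 - βs > 0` and stationary distribution `piv`, the total
variation mixing time satisfies
`t_mix(ε) ≤ 2 N t_rel log t_rel + 4(1 + log 2) N t_rel + 2 (log ε⁻¹ - 1) t_rel`,
where `t_rel = 1/(1 - βs)`. -/
theorem mixing_time_main (N : ℕ) (hN : 1 ≤ N)
    (P : Matrix (Fin N) (Fin N) ℝ) (piv : Fin N → ℝ)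
    (hP0 : ∀ i j, 0 ≤ P i j) (hProw : ∀ i, ∑ j, P i j = 1)
    (hpiv0 : ∀ i, 0 ≤ piv i) (hpiv1 : ∑ i, piv i = 1)
    (hstat : ∀ j, ∑ i, piv i * P i j = piv j)
    (β : Fin N → ℂ)
    (hchar : (P.map (fun a => (a : ℂ))).charpoly
      = ∏ j, (Polynomial.X - Polynomial.C (β j)))
    (hlast : ∀ j : Fin N, (j : ℕ) = N - 1 → β j = 1)
    (βs : ℝ) (hβ : ∀ j : Fin N, (j : ℕ) < N - 1 → ‖β j‖ ≤ βs)
    (hβs0 : 0 ≤ βs) (hβs1 : βs < 1)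
    (ε : ℝ) (hε0 : 0 < ε) (hε1 : ε < 1) :
    ((sInf {t : ℕ | ∀ x, (1 / 2) * ∑ y, |(P ^ t) x y - piv y| ≤ ε} : ℕ) : ℝ) ≤
      2 * N * (1 / (1 - βs)) * Real.log (1 / (1 - βs))
        + 4 * (1 + Real.log 2) * N * (1 / (1 - βs))
        + 2 * (Real.log ε⁻¹ - 1) * (1 / (1 - βs)) := by
  classical
  have hg0 : (0:ℝ) < 1 - βs := by linarith
  set R : ℝ := 1 / (1 - βs) with hRdef
  have hR1 : 1 ≤ R := by
    rw [hRdef]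
    exact one_le_one_div hg0 (by linarith)
  have hRg : R * (1 - βs) = 1 := by
    rw [hRdef]
    field_simp
  set P' : Matrix (Fin N) (Fin N) ℂ := P.map (fun a => (a : ℂ)) with hP'def
  set piv' : Fin N → ℂ := fun i => (piv i : ℂ) with hpiv'def
  set β' : ℕ → ℂ := fun j => if h : j < N then β ⟨j, h⟩ else 1 with hβ'def
  have hβ'lt : ∀ j, j < N - 1 → ‖β' j‖ ≤ βs := by
    intro j hj
    have hjN : j < N := by omega
    have : β' j = β ⟨j, hjN⟩ := by rw [hβ'def]; simp [hjN]
    rw [this]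
    exact hβ ⟨j, hjN⟩ hj
  have hβ'last : β' (N-1) = 1 := by
    have h : N - 1 < N := by omega
    have : β' (N-1) = β ⟨N-1, h⟩ := by rw [hβ'def]; simp [h]
    rw [this]
    exact hlast ⟨N-1, h⟩ rfl
  set Q : ℕ → Matrix (Fin N) (Fin N) ℂ :=
    fun k => Polynomial.aeval P' (∏ j ∈ Finset.range k, (X - C (β' j))) with hQdef
  have hQ0 : Q 0 = 1 := by
    simp only [hQdef]
    simp
  have hQsucc : ∀ k, Q (k+1) = Q k * (P' - β' k • 1) := by
    intro k
    simp only [hQdef]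
    simp only [Finset.prod_range_succ, _root_.map_mul]
    congr 1
    rw [map_sub, aeval_X, aeval_C]
    congr 1
    rw [Algebra.algebraMap_eq_smul_one]
  have hchar' : P'.charpoly = ∏ j ∈ Finset.range N, (X - C (β' j)) := by
    rw [hP'def, hchar, ← Fin.prod_univ_eq_prod_range (fun j => (X - C (β' j))) N]
    apply Finset.prod_congr rfl
    intro j _
    have : β' (j : ℕ) = β j := by
      rw [hβ'def]
      simp [j.isLt]
    rw [this]
  have hQN : Q N = 0 := by
    simp only [hQdef]
    rw [← hchar', Matrix.aeval_self_charpoly]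
  have hcomm : ∀ k, P' * Q k = Q k * P' := by
    intro k
    induction k with
    | zero => rw [hQ0, one_mul, mul_one]
    | succ k ih =>
      rw [hQsucc k, ← mul_assoc, ih, mul_assoc, mul_assoc]
      congr 1
      rw [Matrix.mul_sub, Matrix.sub_mul, Matrix.mul_smul, Matrix.smul_mul, mul_one, one_mul]
  have hQfix : P' * Q (N-1) = Q (N-1) := by
    have hsub : Q (N-1) * (P' - β' (N-1) • 1) = 0 := by
      rw [← hQsucc (N-1)]
      have : N - 1 + 1 = N := by omega
      rw [this, hQN]
    rw [hβ'last, one_smul] at hsub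
    rw [Matrix.mul_sub, mul_one] at hsub
    have h2 : Q (N-1) * P' = Q (N-1) := sub_eq_zero.mp hsub
    rw [hcomm, h2]
  set c : ℕ → ℕ → ℂ := fun t k => if k ≤ t then hcoef β' (t - k) k else 0 with hcdef
  have hc_rec : ∀ t j, c (t+1) j = (if j = 0 then 0 else c t (j-1)) + β' j * c t j := by
    intro t j
    match j with
    | 0 =>
      simp only [hcdef, if_pos (Nat.zero_le (t+1)), if_pos (Nat.zero_le t), if_pos rfl,
        Nat.sub_zero]
      rw [hcoef]
      simp
    | (k+1) =>
      by_cases h1 : k + 1 ≤ t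
      · have h2 : k + 1 ≤ t + 1 := by omega
        simp only [hcdef, if_pos h1, if_pos h2, if_neg (Nat.succ_ne_zero k),
          if_pos (show k ≤ t by omega), Nat.add_sub_cancel]
        have e : t + 1 - (k+1) = (t - (k+1)) + 1 := by omega
        rw [e, hcoef]
        have e2 : t - (k+1) + 1 = t - k := by omega
        rw [e2]
      · by_cases h2 : k + 1 = t + 1
        · have hkt : k = t := by omega
          subst hkt
          simp only [hcdef, if_pos (le_refl (k+1)), if_neg h1, if_neg (Nat.succ_ne_zero k),
            if_pos (le_refl k), Nat.add_sub_cancel, Nat.sub_self]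
          simp [hcoef]
        · have h3 : ¬(k + 1 ≤ t + 1) := by omega
          have h4 : ¬(k ≤ t) := by omega
          simp only [hcdef, if_neg h1, if_neg h3, if_neg (Nat.succ_ne_zero k),
            if_neg h4, Nat.add_sub_cancel]
          ring
  have hQmul : ∀ k, Q k * P' = Q (k+1) + β' k • Q k := by
    intro k
    rw [hQsucc k, Matrix.mul_sub, Matrix.mul_smul, mul_one]
    abel
  have key : ∀ t, P' ^ t = ∑ k ∈ Finset.range N, c t k • Q k := by
    intro t
    induction t with
    | zero =>
      rw [pow_zero, Finset.sum_eq_single 0]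
      · rw [hQ0]
        have : c 0 0 = 1 := by simp [hcdef, hcoef]
        rw [this, one_smul]
      · intro k _ hkne
        have : c 0 k = 0 := by
          simp only [hcdef]
          rw [if_neg]
          omega
        rw [this, zero_smul]
      · intro h
        exact absurd (Finset.mem_range.mpr (by omega)) h
    | succ t ih =>
      have hshift : ∑ k ∈ Finset.range N, c t k • Q (k+1)
          = ∑ j ∈ Finset.range N, (if j = 0 then 0 else c t (j-1) • Q j) := by
        set f : ℕ → Matrix (Fin N) (Fin N) ℂ :=
          fun j => if j = 0 then 0 else c t (j-1) • Q j with hfdef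
        calc ∑ k ∈ Finset.range N, c t k • Q (k+1)
            = ∑ k ∈ Finset.range N, f (k+1) := by
              apply Finset.sum_congr rfl
              intro k _
              simp [hfdef]
          _ = (∑ k ∈ Finset.range N, f (k+1)) + f 0 := by simp [hfdef]
          _ = ∑ j ∈ Finset.range (N+1), f j := (Finset.sum_range_succ' f N).symm
          _ = (∑ j ∈ Finset.range N, f j) + f N := Finset.sum_range_succ f N
          _ = ∑ j ∈ Finset.range N, f j := by
              have : f N = 0 := by
                simp only [hfdef, if_neg (show N ≠ 0 by omega), hQN, smul_zero]
              rw [this, add_zero]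
      calc P' ^ (t+1) = (∑ k ∈ Finset.range N, c t k • Q k) * P' := by
            rw [pow_succ, ih]
        _ = ∑ k ∈ Finset.range N, (c t k • Q (k+1) + (c t k * β' k) • Q k) := by
            rw [Finset.sum_mul]
            apply Finset.sum_congr rfl
            intro k _
            rw [Matrix.smul_mul, hQmul k, smul_add, smul_smul]
        _ = (∑ k ∈ Finset.range N, c t k • Q (k+1))
              + ∑ k ∈ Finset.range N, (c t k * β' k) • Q k := Finset.sum_add_distrib
        _ = ∑ j ∈ Finset.range N, ((if j = 0 then 0 else c t (j-1) • Q j)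
              + (c t j * β' j) • Q j) := by
            rw [hshift, ← Finset.sum_add_distrib]
        _ = ∑ k ∈ Finset.range N, c (t+1) k • Q k := by
            apply Finset.sum_congr rfl
            intro j _
            rw [hc_rec t j, add_smul]
            congr 1
            · by_cases hj : j = 0
              · subst hj; simp
              · rw [if_neg hj, if_neg hj]
            · rw [mul_comm (β' j) (c t j)]
  have hπ : Matrix.vecMul piv' P' = piv' := by
    funext j
    have h := hstat j
    simp only [Matrix.vecMul, dotProduct, hpiv'def, hP'def, Matrix.map_apply]
    exact_mod_cast congrArg (fun r : ℝ => (r : ℂ)) h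
  have hπpow : ∀ t, Matrix.vecMul piv' (P' ^ t) = piv' := by
    intro t
    induction t with
    | zero => rw [pow_zero, Matrix.vecMul_one]
    | succ t ih => rw [pow_succ, ← Matrix.vecMul_vecMul, ih, hπ]
  have h1vec : P'.mulVec (fun _ => 1) = (fun _ => 1) := by
    funext x
    show ∑ z, P' x z * 1 = 1
    simp only [mul_one, hP'def, Matrix.map_apply]
    exact_mod_cast congrArg (fun r : ℝ => (r : ℂ)) (hProw x)
  have hrows : ∀ (y x x' : Fin N), Q (N-1) x y = Q (N-1) x' y := by
    intro y x x'
    have hNlt : N - 1 < N := by omega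
    set lastIdx : Fin N := ⟨N-1, hNlt⟩ with hlastIdx
    set q : Polynomial ℂ := ∏ j ∈ Finset.univ.erase lastIdx, (X - C (β j)) with hqdef
    have hfac : P'.charpoly = (X - C 1) * q := by
      rw [hchar, hqdef, ← Finset.mul_prod_erase Finset.univ _ (Finset.mem_univ lastIdx)]
      congr 2
      rw [hlast lastIdx rfl]
    have hq1 : q.eval 1 ≠ 0 := by
      rw [hqdef, eval_prod]
      apply Finset.prod_ne_zero_iff.mpr
      intro j hj
      simp only [eval_sub, eval_X, eval_C]
      apply sub_ne_zero.mpr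
      intro e
      have hjne : j ≠ lastIdx := (Finset.mem_erase.mp hj).1
      have hjval : (j : ℕ) < N - 1 := by
        have h2 : (j : ℕ) ≠ N - 1 := fun h => hjne (Fin.ext h)
        have := j.isLt
        omega
      have := hβ j hjval
      rw [← e] at this
      simp at this
      linarith
    have hv : P'.mulVec (fun z => Q (N-1) z y) = fun z => Q (N-1) z y := by
      funext z
      show ∑ w, P' z w * Q (N-1) w y = Q (N-1) z y
      have := congrFun (congrFun hQfix z) y
      rw [Matrix.mul_apply] at this
      exact this
    exact eigvec_const P' q hfac hq1 h1vec _ hv x x'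
  have hsumpiv' : (∑ z, piv' z) = 1 := by
    simp only [hpiv'def]
    exact_mod_cast congrArg (fun r : ℝ => (r : ℂ)) hpiv1
  have hπQN : ∀ x y, Matrix.vecMul piv' (Q (N-1)) y = Q (N-1) x y := by
    intro x y
    show ∑ z, piv' z * Q (N-1) z y = Q (N-1) x y
    calc ∑ z, piv' z * Q (N-1) z y = ∑ z, piv' z * Q (N-1) x y := by
          apply Finset.sum_congr rfl
          intro z _
          rw [hrows y z x]
      _ = (∑ z, piv' z) * Q (N-1) x y := by rw [Finset.sum_mul]
      _ = Q (N-1) x y := by rw [hsumpiv', one_mul]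
  have hvsmul : ∀ (a : ℂ) (M : Matrix (Fin N) (Fin N) ℂ) (v : Fin N → ℂ),
      Matrix.vecMul v (a • M) = a • (Matrix.vecMul v M) := by
    intro a M v
    funext y
    show ∑ z, v z * (a • M) z y = a * ∑ z, v z * M z y
    rw [Finset.mul_sum]
    apply Finset.sum_congr rfl
    intro z _
    simp only [Matrix.smul_apply, smul_eq_mul]
    ring
  have hπQ : ∀ k, Matrix.vecMul piv' (Q k)
      = (∏ j ∈ Finset.range k, (1 - β' j)) • piv' := by
    intro k
    induction k with
    | zero => rw [hQ0, Matrix.vecMul_one, Finset.range_zero, Finset.prod_empty, one_smul]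
    | succ k ih =>
      rw [Finset.prod_range_succ, hQsucc k, ← Matrix.vecMul_vecMul, ih, Matrix.smul_vecMul,
        Matrix.vecMul_sub, hπ, hvsmul, Matrix.vecMul_one]
      funext y
      simp only [Pi.smul_apply, Pi.sub_apply, smul_eq_mul]
      ring
  have ident : ∀ t x y, (P' ^ t) x y - piv' y
      = ∑ k ∈ Finset.range N, c t k * (Q k x y - Matrix.vecMul piv' (Q k) y) := by
    intro t x y
    have h1 : (P' ^ t) x y = ∑ k ∈ Finset.range N, c t k * Q k x y := by
      have h := congrFun (congrFun (key t) x) y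
      rw [Matrix.sum_apply] at h
      simpa only [Matrix.smul_apply, smul_eq_mul] using h
    have h2 : piv' y = ∑ k ∈ Finset.range N, c t k * Matrix.vecMul piv' (Q k) y := by
      calc piv' y = Matrix.vecMul piv' (P' ^ t) y := (congrFun (hπpow t) y).symm
        _ = ∑ z, piv' z * (∑ k ∈ Finset.range N, c t k • Q k) z y := by rw [key t]; rfl
        _ = ∑ z, ∑ k ∈ Finset.range N, piv' z * (c t k * Q k z y) := by
            apply Finset.sum_congr rfl
            intro z _
            rw [Matrix.sum_apply, Finset.mul_sum]
            apply Finset.sum_congr rfl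
            intro k _
            rw [Matrix.smul_apply, smul_eq_mul]
        _ = ∑ k ∈ Finset.range N, ∑ z, piv' z * (c t k * Q k z y) := Finset.sum_comm
        _ = ∑ k ∈ Finset.range N, c t k * Matrix.vecMul piv' (Q k) y := by
            apply Finset.sum_congr rfl
            intro k _
            show _ = c t k * ∑ z, piv' z * Q k z y
            rw [Finset.mul_sum]
            apply Finset.sum_congr rfl
            intro z _
            ring
    rw [h1, h2, ← Finset.sum_sub_distrib]
    apply Finset.sum_congr rfl
    intro k _
    ring
  have identN : ∀ t x y, (P' ^ t) x y - piv' y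
      = ∑ k ∈ Finset.range (N-1),
          c t k * (Q k x y - (∏ j ∈ Finset.range k, (1 - β' j)) * piv' y) := by
    intro t x y
    rw [ident t x y]
    have hNsucc : N - 1 + 1 = N := by omega
    have e1 : ∑ k ∈ Finset.range N, c t k * (Q k x y - Matrix.vecMul piv' (Q k) y)
        = ∑ k ∈ Finset.range (N-1), c t k * (Q k x y - Matrix.vecMul piv' (Q k) y)
          + c t (N-1) * (Q (N-1) x y - Matrix.vecMul piv' (Q (N-1)) y) := by
      rw [← Finset.sum_range_succ, hNsucc]
    rw [e1, hπQN x y, sub_self, mul_zero, add_zero]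
    apply Finset.sum_congr rfl
    intro k _
    rw [hπQ k]
    simp only [Pi.smul_apply, smul_eq_mul]
  have hProwsum : ∀ z, ∑ y, ‖P' z y‖ = 1 := by
    intro z
    have h : ∀ y : Fin N, ‖P' z y‖ = P z y := by
      intro y
      simp only [hP'def, Matrix.map_apply, Complex.norm_real, Real.norm_eq_abs]
      exact abs_of_nonneg (hP0 z y)
    rw [Finset.sum_congr rfl (fun y _ => h y), hProw z]
  have honerowsum : ∀ z : Fin N, ∑ y, ‖(1 : Matrix (Fin N) (Fin N) ℂ) z y‖ = 1 := by
    intro z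
    rw [Finset.sum_eq_single z]
    · simp [Matrix.one_apply]
    · intro y _ hy
      rw [Matrix.one_apply_ne (Ne.symm hy)]
      simp
    · intro h
      exact absurd (Finset.mem_univ z) h
  have hQrowsum : ∀ k, k ≤ N - 1 → ∀ x, ∑ y, ‖Q k x y‖ ≤ 2 ^ k := by
    intro k
    induction k with
    | zero =>
      intro _ x
      rw [hQ0, honerowsum x, pow_zero]
    | succ k ih =>
      intro hk x
      have hk' : k ≤ N - 1 := by omega
      have hβk : ‖β' k‖ ≤ βs := hβ'lt k (by omega)
      have hrowB : ∀ z, ∑ y, ‖(P' - β' k • 1) z y‖ ≤ 1 + βs := by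
        intro z
        calc ∑ y, ‖(P' - β' k • 1) z y‖
            ≤ ∑ y, (‖P' z y‖
                + ‖β' k‖ * ‖(1 : Matrix (Fin N) (Fin N) ℂ) z y‖) := by
              apply Finset.sum_le_sum
              intro y _
              simp only [Matrix.sub_apply, Matrix.smul_apply, smul_eq_mul]
              refine le_trans (norm_sub_le _ _) ?_
              rw [norm_mul]
          _ = (∑ y, ‖P' z y‖)
                + ‖β' k‖ * ∑ y, ‖(1 : Matrix (Fin N) (Fin N) ℂ) z y‖ := by
              rw [Finset.sum_add_distrib, Finset.mul_sum]
          _ = 1 + ‖β' k‖ * 1 := by rw [hProwsum z, honerowsum z]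
          _ ≤ 1 + βs := by rw [mul_one]; linarith
      calc ∑ y, ‖Q (k+1) x y‖
          = ∑ y, ‖∑ z, Q k x z * (P' - β' k • 1) z y‖ := by
            apply Finset.sum_congr rfl
            intro y _
            rw [hQsucc k, Matrix.mul_apply]
        _ ≤ ∑ y, ∑ z, ‖Q k x z‖ * ‖(P' - β' k • 1) z y‖ := by
            apply Finset.sum_le_sum
            intro y _
            refine le_trans (norm_sum_le _ _) ?_
            apply Finset.sum_le_sum
            intro z _
            rw [norm_mul]
        _ = ∑ z, ‖Q k x z‖ * ∑ y, ‖(P' - β' k • 1) z y‖ := by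
            rw [Finset.sum_comm]
            apply Finset.sum_congr rfl
            intro z _
            rw [Finset.mul_sum]
        _ ≤ ∑ z, ‖Q k x z‖ * (1 + βs) := by
            apply Finset.sum_le_sum
            intro z _
            exact mul_le_mul_of_nonneg_left (hrowB z) (norm_nonneg _)
        _ = (1 + βs) * ∑ z, ‖Q k x z‖ := by
            rw [← Finset.sum_mul]
            ring
        _ ≤ (1 + βs) * 2 ^ k := by
            apply mul_le_mul_of_nonneg_left (ih hk' x) (by linarith)
        _ ≤ 2 ^ (k+1) := by
            rw [pow_succ]
            nlinarith [pow_pos (show (0:ℝ) < 2 by norm_num) k]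
  have hρ : ∀ k, k ≤ N - 1 →
      ‖∏ j ∈ Finset.range k, (1 - β' j)‖ ≤ 2 ^ k := by
    intro k hk
    rw [Complex.norm_prod]
    calc ∏ j ∈ Finset.range k, ‖1 - β' j‖
        ≤ ∏ j ∈ Finset.range k, (2:ℝ) := by
          apply Finset.prod_le_prod
          · intro j _
            exact norm_nonneg _
          · intro j hj
            have hjk : j < N - 1 := by
              have := Finset.mem_range.mp hj
              omega
            refine le_trans (norm_sub_le _ _) ?_
            have := hβ'lt j hjk
            have h1 : ‖(1:ℂ)‖ = 1 := norm_one
            rw [h1]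
            linarith
      _ = 2 ^ k := by rw [Finset.prod_const, Finset.card_range]
  have hpivsum : ∑ y, ‖piv' y‖ = 1 := by
    have h : ∀ y : Fin N, ‖piv' y‖ = piv y := by
      intro y
      simp only [hpiv'def, Complex.norm_real, Real.norm_eq_abs]
      exact abs_of_nonneg (hpiv0 y)
    rw [Finset.sum_congr rfl (fun y _ => h y), hpiv1]
  have hDb : ∀ t x, ∑ y, ‖(P' ^ t) x y - piv' y‖
      ≤ ∑ k ∈ Finset.range (N-1), ‖c t k‖ * 2 ^ (k+1) := by
    intro t x
    calc ∑ y, ‖(P' ^ t) x y - piv' y‖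
        = ∑ y, ‖∑ k ∈ Finset.range (N-1),
            c t k * (Q k x y - (∏ j ∈ Finset.range k, (1 - β' j)) * piv' y)‖ := by
          apply Finset.sum_congr rfl
          intro y _
          rw [identN t x y]
      _ ≤ ∑ y, ∑ k ∈ Finset.range (N-1), ‖c t k‖
            * ‖Q k x y - (∏ j ∈ Finset.range k, (1 - β' j)) * piv' y‖ := by
          apply Finset.sum_le_sum
          intro y _
          refine le_trans (norm_sum_le _ _) ?_
          apply Finset.sum_le_sum
          intro k _
          rw [norm_mul]
      _ = ∑ k ∈ Finset.range (N-1), ‖c t k‖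
            * ∑ y, ‖Q k x y - (∏ j ∈ Finset.range k, (1 - β' j)) * piv' y‖ := by
          rw [Finset.sum_comm]
          apply Finset.sum_congr rfl
          intro k _
          rw [Finset.mul_sum]
      _ ≤ ∑ k ∈ Finset.range (N-1), ‖c t k‖ * 2 ^ (k+1) := by
          apply Finset.sum_le_sum
          intro k hk
          have hkN : k < N - 1 := Finset.mem_range.mp hk
          apply mul_le_mul_of_nonneg_left ?_ (norm_nonneg _)
          calc ∑ y, ‖Q k x y - (∏ j ∈ Finset.range k, (1 - β' j)) * piv' y‖
              ≤ ∑ y, (‖Q k x y‖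
                  + ‖∏ j ∈ Finset.range k, (1 - β' j)‖ * ‖piv' y‖) := by
                apply Finset.sum_le_sum
                intro y _
                refine le_trans (norm_sub_le _ _) ?_
                rw [norm_mul]
            _ = (∑ y, ‖Q k x y‖)
                  + ‖∏ j ∈ Finset.range k, (1 - β' j)‖
                    * ∑ y, ‖piv' y‖ := by
                rw [Finset.sum_add_distrib, Finset.mul_sum]
            _ ≤ 2 ^ k + 2 ^ k * 1 := by
                apply add_le_add (hQrowsum k (by omega) x)
                rw [hpivsum]
                exact mul_le_mul_of_nonneg_right (hρ k (by omega)) (by norm_num)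
            _ = 2 ^ (k+1) := by rw [pow_succ]; ring
  have hcb : ∀ t k, k < N - 1 →
      ‖c t k‖ ≤ (t.choose k : ℝ) * βs ^ (t - k) := by
    intro t k hk
    by_cases hkt : k ≤ t
    · have hc : c t k = hcoef β' (t - k) k := by simp only [hcdef, if_pos hkt]
      rw [hc]
      have hb : ∀ j, j ≤ N - 2 → ‖β' j‖ ≤ βs := by
        intro j hj
        exact hβ'lt j (by omega)
      have := hcoef_bound β' βs (N-2) hβs0 hb (t-k) k (by omega)
      rw [show t - k + k = t from by omega] at this
      exact this
    · have hc : c t k = 0 := by simp only [hcdef, if_neg hkt]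
      rw [hc, show t.choose k = 0 from Nat.choose_eq_zero_of_lt (by omega)]
      simp
  have hmappow : ∀ t : ℕ, P' ^ t = (P ^ t).map (fun a => (a : ℂ)) := by
    intro t
    induction t with
    | zero =>
      rw [pow_zero, pow_zero]
      exact (Matrix.map_one _ Complex.ofReal_zero Complex.ofReal_one).symm
    | succ t ih =>
      rw [pow_succ, pow_succ, ih, hP'def]
      refine Matrix.ext fun x y => ?_
      rw [Matrix.mul_apply, Matrix.map_apply, Matrix.mul_apply, Complex.ofReal_sum]
      apply Finset.sum_congr rfl
      intro z _
      simp [Matrix.map_apply]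
  have hreal : ∀ t x y, |(P ^ t) x y - piv y| = ‖(P' ^ t) x y - piv' y‖ := by
    intro t x y
    rw [hmappow t]
    simp only [Matrix.map_apply, hpiv'def]
    rw [← Complex.ofReal_sub, Complex.norm_real, Real.norm_eq_abs]
  -- numeric part
  set tR : ℝ := 2 * N * R * Real.log R + 4 * (1 + Real.log 2) * N * R
      + 2 * (Real.log ε⁻¹ - 1) * R with htRdef
  have hlogR : 0 ≤ Real.log R := Real.log_nonneg hR1
  have hlog2 : 0 ≤ Real.log 2 := Real.log_nonneg (by norm_num)
  have hlogε : 0 < Real.log ε⁻¹ := by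
    apply Real.log_pos
    rw [← one_div]
    exact one_lt_one_div hε0 hε1
  have hN1R : (1:ℝ) ≤ (N:ℝ) := by exact_mod_cast hN
  have htRN : (N:ℝ) ≤ tR := by
    rw [htRdef]
    nlinarith [mul_nonneg (mul_nonneg (by linarith : (0:ℝ) ≤ 2*(N:ℝ)) (by linarith : (0:ℝ) ≤ R)) hlogR,
      mul_nonneg (mul_nonneg (by linarith : (0:ℝ) ≤ 4*(N:ℝ)) (by linarith : (0:ℝ) ≤ R)) hlog2,
      mul_nonneg (by linarith : (0:ℝ) ≤ R) hlogε.le,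
      mul_le_mul_of_nonneg_left hR1 (by linarith : (0:ℝ) ≤ 4*(N:ℝ)-2)]
  have htR0 : 0 ≤ tR := le_trans (by exact_mod_cast Nat.zero_le N) htRN
  set t₀ : ℕ := ⌊tR⌋₊ with ht₀def
  have ht₀le : (t₀:ℝ) ≤ tR := Nat.floor_le htR0
  have ht₀gt : tR - 1 < (t₀:ℝ) := by
    have := Nat.lt_floor_add_one tR; linarith
  have ht₀N : N ≤ t₀ := Nat.le_floor (by exact_mod_cast htRN)
  have hterm : ∀ k, k < N - 1 →
      ‖c t₀ k‖ * 2 ^ (k+1)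
        ≤ 2 * (4 * Real.exp 1 * R) ^ (N-2) * Real.exp (-((t₀:ℝ) * (1 - βs))/2) := by
    intro k hk
    have h1 := hcb t₀ k hk
    have h2 := term_bound t₀ k (N-2) βs R hβs0 hβs1 hRdef (by omega) (by omega)
    calc ‖c t₀ k‖ * 2 ^ (k+1)
        ≤ ((t₀.choose k : ℝ) * βs ^ (t₀ - k)) * 2 ^ (k+1) := by
          apply mul_le_mul_of_nonneg_right h1 (by positivity)
      _ ≤ 2 * (4 * Real.exp 1 * R) ^ (N-2) * Real.exp (-((t₀:ℝ) * (1 - βs))/2) := h2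
  have hfinal : ((N:ℝ) - 1) * (4 * Real.exp 1 * R) ^ (N-2)
      * Real.exp (-((t₀:ℝ) * (1 - βs))/2) ≤ ε := by
    by_cases hNone : N = 1
    · subst hNone
      norm_num
      positivity
    · have hN2 : 2 ≤ N := by omega
      have hN2R : (2:ℝ) ≤ (N:ℝ) := by exact_mod_cast hN2
      have he1 : (1:ℝ) ≤ Real.exp 1 := by
        have := Real.add_one_le_exp 1
        linarith
      have hR0 : (0:ℝ) < R := by linarith
      have h4eR : (1:ℝ) ≤ 4 * Real.exp 1 * R := by nlinarith
      have hNcast : ((N - 2 : ℕ) : ℝ) = (N:ℝ) - 2 := by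
        push_cast [Nat.cast_sub hN2]
        ring
      set Z : ℝ := Real.log ((N:ℝ)-1) + ((N - 2 : ℕ) : ℝ) * Real.log (4*Real.exp 1*R)
          + Real.log ε⁻¹ with hZdef
      have hlogN1 : Real.log ((N:ℝ)-1) ≤ (N:ℝ) - 2 := by
        have := Real.log_le_sub_one_of_pos (show (0:ℝ) < (N:ℝ)-1 by linarith)
        linarith
      have hlog4eR_eq : Real.log (4*Real.exp 1*R) = 2 * Real.log 2 + 1 + Real.log R := by
        rw [Real.log_mul (by positivity) (by positivity),
          Real.log_mul (by norm_num) (Real.exp_pos 1).ne', Real.log_exp,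
          show (4:ℝ) = 2^2 by norm_num, Real.log_pow]
        push_cast
        ring
      have hZle : 2*R*Z ≤ tR - 1 := by
        rw [hZdef, hNcast, hlog4eR_eq, htRdef]
        have hs := mul_le_mul_of_nonneg_left hlogN1 (show (0:ℝ) ≤ 2*R by linarith)
        have hRa := mul_nonneg hR0.le hlogR
        have hRb := mul_nonneg hR0.le hlog2
        have hid : 2*(N:ℝ)*R*Real.log R + 4*(1+Real.log 2)*(N:ℝ)*R
              + 2*(Real.log ε⁻¹ - 1)*R - 1
              - (2*R*((N:ℝ)-2) + 2*R*(((N:ℝ)-2)*(2*Real.log 2 + 1 + Real.log R))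
                + 2*R*Real.log ε⁻¹)
            = 4*(R*Real.log R) + 6*R + 8*(R*Real.log 2) - 1 := by ring
        linarith [hid]
      have ht₀Z : Z ≤ (t₀:ℝ)*(1-βs)/2 := by
        have h1 : 2*R*Z ≤ (t₀:ℝ) := by linarith
        have h2 := mul_le_mul_of_nonneg_right h1 (by linarith : (0:ℝ) ≤ (1-βs)/2)
        calc Z = (2*R*Z) * ((1-βs)/2) := by
              have : 2*R*Z*((1-βs)/2) = Z * (R*(1-βs)) := by ring
              rw [this, hRg, mul_one]
          _ ≤ (t₀:ℝ) * ((1-βs)/2) := h2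
          _ = (t₀:ℝ)*(1-βs)/2 := by ring
      have hexp : ((N:ℝ)-1) * (4*Real.exp 1*R)^(N-2) = Real.exp (Z - Real.log ε⁻¹) := by
        rw [hZdef]
        rw [show Real.log ((N:ℝ)-1) + ((N - 2 : ℕ) : ℝ) * Real.log (4*Real.exp 1*R)
            + Real.log ε⁻¹ - Real.log ε⁻¹
            = Real.log ((N:ℝ)-1) + ((N - 2 : ℕ) : ℝ) * Real.log (4*Real.exp 1*R) by ring]
        rw [Real.exp_add, Real.exp_log (show (0:ℝ) < (N:ℝ)-1 by linarith)]
        congr 1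
        rw [Real.exp_nat_mul, Real.exp_log (by positivity)]
      have hli : Real.log ε⁻¹ = - Real.log ε := Real.log_inv ε
      calc ((N:ℝ) - 1) * (4 * Real.exp 1 * R) ^ (N-2) * Real.exp (-((t₀:ℝ) * (1 - βs))/2)
          = Real.exp (Z - Real.log ε⁻¹ + (-((t₀:ℝ) * (1 - βs))/2)) := by
            rw [hexp, ← Real.exp_add]
        _ ≤ Real.exp (Real.log ε) := by
            apply Real.exp_le_exp.mpr
            linarith
        _ = ε := Real.exp_log hε0
  have hmem : t₀ ∈ {t : ℕ | ∀ x, (1 / 2 : ℝ) * ∑ y, |(P ^ t) x y - piv y| ≤ ε} := by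
    intro x
    calc (1/2 : ℝ) * ∑ y, |(P ^ t₀) x y - piv y|
        = (1/2 : ℝ) * ∑ y, ‖(P' ^ t₀) x y - piv' y‖ := by
          congr 1; exact Finset.sum_congr rfl fun y _ => hreal t₀ x y
      _ ≤ (1/2 : ℝ) * ∑ k ∈ Finset.range (N-1), ‖c t₀ k‖ * 2 ^ (k+1) := by
          have := hDb t₀ x; linarith
      _ ≤ (1/2 : ℝ) * ∑ k ∈ Finset.range (N-1),
            (2 * (4 * Real.exp 1 * R) ^ (N-2) * Real.exp (-((t₀:ℝ) * (1 - βs))/2)) := by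
          have : ∑ k ∈ Finset.range (N-1), ‖c t₀ k‖ * 2 ^ (k+1)
              ≤ ∑ k ∈ Finset.range (N-1),
                (2 * (4 * Real.exp 1 * R) ^ (N-2) * Real.exp (-((t₀:ℝ) * (1 - βs))/2)) :=
            Finset.sum_le_sum fun k hk => hterm k (Finset.mem_range.mp hk)
          linarith
      _ = ((N:ℝ) - 1) * (4 * Real.exp 1 * R) ^ (N-2)
            * Real.exp (-((t₀:ℝ) * (1 - βs))/2) := by
          rw [Finset.sum_const, Finset.card_range, nsmul_eq_mul]
          have : ((N - 1 : ℕ) : ℝ) = (N:ℝ) - 1 := by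
            have := hN; push_cast [Nat.cast_sub hN]; ring
          rw [this]; ring
      _ ≤ ε := hfinal
  calc ((sInf {t : ℕ | ∀ x, (1 / 2 : ℝ) * ∑ y, |(P ^ t) x y - piv y| ≤ ε} : ℕ) : ℝ)
      ≤ (t₀ : ℝ) := by exact_mod_cast Nat.sInf_le hmem
    _ ≤ tR := ht₀le
end
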